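/- arXiv:cs/0508030 — 5 statements merged into one kernel-verified Lean document; each statement's English description precedes it below -/
import Mathlib

section
/- For every integer J ≥ 3 and every termination length L ≥ 1 there exists a real constant c₁ (depending only on J and L, not on M) such that for every integer M ≥ 1 there is a choice of the permutations π_{i,h,t} (i ∈ {0,…,J−1}, h ∈ {0,1}, t ∈ {1,…,L+J}) for which the girth g of the associated terminated Tanner graph satisfies g/4 > log M / (2 log((2J−1)(J−1))) − c₁; equivalently, there exists a code in the ensemble C_P(J,2J,M) for which the number of independent (cycle-free) belief-propagation decoding iterations l₀ satisfies l₀ > log M / (2 log((2J−1)(J−1))) − c₁. -/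
/-- The terminated Tanner graph of a code in the ensemble `C_P(J, 2J, M)` with
termination length `L`, determined by the permutations `π i h t`
(`i ∈ {0,…,J-1}`, `h ∈ {0,1}`, `t ∈ {1,…,L+J}`): symbol node `(t, h, m)` is
adjacent exactly to the `J` check nodes `(t + i, π i h t m)` for
`i ∈ {0,…,J-1}`. -/
def tannerGraph (J M L : ℕ)
    (π : Fin J → Fin 2 → Fin (L + J) → Equiv.Perm (Fin M)) :
    SimpleGraph ((Fin (L + J) × Fin 2 × Fin M) ⊕ (Fin (L + 2 * J - 1) × Fin M)) :=
  SimpleGraph.fromRel (fun a b =>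
    match a, b with
    | Sum.inl (t, h, m), Sum.inr (s, m') =>
        ∃ i : Fin J, (s : ℕ) = (t : ℕ) + (i : ℕ) ∧ m' = π i h t m
    | _, _ => False)

set_option linter.unusedSectionVars false
set_option maxHeartbeats 1600000


open SimpleGraph Walk

namespace Tanner

variable {V : Type*} {G : SimpleGraph V}

lemma edges_eq_of_support_eq {W : Type*} {G₁ G₂ : SimpleGraph W} :
    ∀ {a b c d : W} (p₁ : G₁.Walk a b) (p₂ : G₂.Walk c d),
    p₁.support = p₂.support → p₁.edges = p₂.edges := by
  intro a b c d p₁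
  induction p₁ generalizing c with
  | nil =>
    intro p₂ h
    cases p₂ with
    | nil => simp
    | cons h' q => simp at h
  | cons h' q ih =>
    intro p₂ hsup
    cases p₂ with
    | nil => simp at hsup
    | cons h'' q₂ =>
      simp only [support_cons, List.cons_eq_cons] at hsup
      obtain ⟨rfl, hs⟩ := hsup
      have h1 : q.support.head? = q₂.support.head? := by rw [hs]
      rw [q.support_eq_cons, q₂.support_eq_cons] at h1
      simp only [List.head?_cons, Option.some_inj] at h1
      subst h1
      simp only [edges_cons, List.cons_eq_cons]
      exact ⟨by trivial, ih q₂ hs⟩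

lemma first_edge_of_path {u y : V} (p : G.Walk u y) (hp : p.IsPath) {e : Sym2 V}
    (he : e ∈ p.edges) (hu : u ∈ e) :
    ∃ (b : V) (h : G.Adj u b) (q : G.Walk b y), p = Walk.cons h q ∧ e = s(u, b) := by
  cases p with
  | nil => simp at he
  | cons h q =>
    rename_i b
    rw [edges_cons, List.mem_cons] at he
    rcases he with he | he
    · exact ⟨b, h, q, rfl, he⟩
    · exfalso
      obtain ⟨z, rfl⟩ := Sym2.mem_iff_exists.mp hu
      have : u ∈ q.support := q.fst_mem_support_of_mem_edges he
      rw [cons_isPath_iff] at hp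
      exact hp.2 this

lemma cycle_split {u a : V} (c : G.Walk u u) (hc : c.IsCycle) {e : Sym2 V}
    (hea : e = s(u, a)) (he : e ∈ c.edges) (hua : u ≠ a) :
    ∃ p : G.Walk a u, p.IsPath ∧ e ∉ p.edges ∧ p.length + 1 = c.length := by
  cases c with
  | nil => simp at he
  | cons h q =>
    rename_i b
    rw [cons_isCycle_iff] at hc
    by_cases hb : b = a
    · subst hb
      refine ⟨q, hc.1, ?_, by simp⟩
      rw [hea]; exact hc.2
    · have hne : e ≠ s(u, b) := by
        rw [hea]
        intro hcon
        rw [Sym2.eq_iff] at hcon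
        rcases hcon with ⟨-, h2⟩ | ⟨-, h2⟩
        · exact hb h2.symm
        · exact hua h2.symm
      have heq : e ∈ q.edges := by
        rw [edges_cons, List.mem_cons] at he
        tauto
      have heq' : e ∈ q.reverse.edges := by rwa [edges_reverse, List.mem_reverse]
      have hu : u ∈ e := by rw [hea]; exact Sym2.mem_mk_left u a
      obtain ⟨b₂, h₂, q₂, hdec, he2⟩ :=
        first_edge_of_path q.reverse hc.1.reverse heq' hu
      have hb₂ : b₂ = a := by
        rw [hea] at he2
        rw [Sym2.eq_iff] at he2
        rcases he2 with ⟨-, h2⟩ | ⟨-, h2⟩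
        · exact h2.symm
        · exact absurd h2.symm hua
      subst hb₂
      have hq₂path : q₂.IsPath ∧ u ∉ q₂.support := by
        have := hc.1.reverse
        rw [hdec, cons_isPath_iff] at this
        exact this
      refine ⟨q₂.concat h.symm, ?_, ?_, ?_⟩
      · rw [← isPath_reverse_iff, reverse_concat, cons_isPath_iff]
        refine ⟨hq₂path.1.reverse, ?_⟩
        rw [support_reverse, List.mem_reverse]
        exact hq₂path.2
      · rw [edges_concat, List.concat_eq_append, List.mem_append]
        rintro (hin | hin)
        · have htrail := hc.1.reverse.isTrail
          rw [hdec] at htrail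
          have := htrail.edges_nodup
          rw [edges_cons, List.nodup_cons] at this
          rw [he2] at hin
          exact this.1 hin
        · simp only [List.mem_singleton] at hin
          rw [hea] at hin
          rw [Sym2.eq_iff] at hin
          rcases hin with ⟨-, h2⟩ | ⟨-, h2⟩
          · exact hua h2.symm
          · exact hb h2.symm
      · have hlen : q.reverse.length = q₂.length + 1 := by rw [hdec]; simp
        rw [length_reverse] at hlen
        rw [length_concat, length_cons]
        omega

lemma path_split {x y : V} (p : G.Walk x y) (hp : p.IsPath) {e : Sym2 V}
    (he : e ∈ p.edges) :
    ∃ (a b : V) (_ : e = s(a, b)) (α : G.Walk x a) (β : G.Walk b y),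
      α.IsPath ∧ β.IsPath ∧ e ∉ α.edges ∧ e ∉ β.edges ∧
      (∀ f ∈ α.edges, f ∈ p.edges) ∧ (∀ f ∈ β.edges, f ∈ p.edges) ∧
      (∀ z ∈ α.support, z ∈ p.support) ∧
      α.length + 1 + β.length = p.length := by
  induction p with
  | nil => simp at he
  | cons h q ih =>
    rename_i u z w
    rw [cons_isPath_iff] at hp
    rw [edges_cons, List.mem_cons] at he
    by_cases hfirst : e = s(u, z)
    · refine ⟨u, z, hfirst, Walk.nil, q, by simp, hp.1, by simp, ?_, by simp, ?_, ?_, by simp only [length_nil, length_cons]; omega⟩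
      · -- e ∉ q.edges : from trail of cons
        intro hcon
        rw [hfirst] at hcon
        exact hp.2 (q.fst_mem_support_of_mem_edges hcon)
      · intro f hf; rw [edges_cons]; exact List.mem_cons_of_mem _ hf
      · intro zz hzz; simp at hzz; simp [hzz]
    · have heq : e ∈ q.edges := by tauto
      obtain ⟨a, b, hab, α', β', hα', hβ', heα', heβ', hαs, hβs, hαsup, hlen⟩ := ih hp.1 heq
      refine ⟨a, b, hab, Walk.cons h α', β', ?_, hβ', ?_, heβ', ?_, ?_, ?_, ?_⟩
      · rw [cons_isPath_iff]
        exact ⟨hα', fun hcon => hp.2 (hαsup _ hcon)⟩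
      · rw [edges_cons, List.mem_cons]
        rintro (hcon | hcon)
        · exact hfirst hcon
        · exact heα' hcon
      · intro f hf
        rw [edges_cons, List.mem_cons] at hf ⊢
        rcases hf with rfl | hf
        · left; rfl
        · right; exact hαs _ hf
      · intro f hf
        rw [edges_cons, List.mem_cons]
        right; exact hβs _ hf
      · intro zz hzz
        rw [support_cons, List.mem_cons] at hzz ⊢
        rcases hzz with rfl | hzz
        · left; rfl
        · right; exact hαsup _ hzz
      · simp only [length_cons]; omega


variable {W : Type*} [Fintype W] [DecidableEq W]

open Classical in
/-- neighbors as a Finset, via classical decidability -/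
noncomputable def nbrF (G : SimpleGraph W) (v : W) : Finset W :=
  Finset.univ.filter (G.Adj v)

lemma mem_nbrF {G : SimpleGraph W} {v y : W} : y ∈ nbrF G v ↔ G.Adj v y := by
  simp [nbrF]

/-- iterated neighborhoods (balls) -/
noncomputable def RB (G : SimpleGraph W) (x : W) : ℕ → Finset W
  | 0 => {x}
  | (k+1) => RB G x k ∪ (RB G x k).biUnion (nbrF G)

lemma RB_subset_succ (G : SimpleGraph W) (x : W) (k : ℕ) : RB G x k ⊆ RB G x (k+1) :=
  Finset.subset_union_left

lemma RB_mono (G : SimpleGraph W) (x : W) {k k' : ℕ} (h : k ≤ k') : RB G x k ⊆ RB G x k' := by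
  induction h with
  | refl => exact Finset.Subset.refl _
  | step _ ih => exact ih.trans (RB_subset_succ _ _ _)

lemma x_mem_RB (G : SimpleGraph W) (x : W) (k : ℕ) : x ∈ RB G x k :=
  RB_mono G x (Nat.zero_le k) (by simp [RB])

lemma mem_RB_of_walk (G : SimpleGraph W) {x y : W} (p : G.Walk y x) :
    y ∈ RB G x p.length := by
  induction p with
  | nil => simp [RB]
  | cons h q ih =>
    rw [length_cons, RB]
    refine Finset.mem_union_right _ (Finset.mem_biUnion.2 ⟨_, ih, ?_⟩)
    exact mem_nbrF.2 h.symm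

lemma mem_RB_of_walk' (G : SimpleGraph W) {x y : W} (p : G.Walk x y) {k : ℕ}
    (hk : p.length ≤ k) : y ∈ RB G x k :=
  RB_mono G x (by simpa using hk) (mem_RB_of_walk G p.reverse)

/-- spheres -/
noncomputable def SB (G : SimpleGraph W) (x : W) : ℕ → Finset W
  | 0 => {x}
  | (ℓ+1) => RB G x (ℓ+1) \ RB G x ℓ

lemma card_RB_le_sum_SB (G : SimpleGraph W) (x : W) (k : ℕ) :
    (RB G x k).card ≤ ∑ ℓ ∈ Finset.range (k+1), (SB G x ℓ).card := by
  induction k with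
  | zero => simp [RB, SB]
  | succ k ih =>
    have hsub : RB G x (k+1) ⊆ RB G x k ∪ SB G x (k+1) := by
      intro y hy
      by_cases hy' : y ∈ RB G x k
      · exact Finset.mem_union_left _ hy'
      · exact Finset.mem_union_right _ (Finset.mem_sdiff.2 ⟨hy, hy'⟩)
    calc (RB G x (k+1)).card ≤ (RB G x k ∪ SB G x (k+1)).card := Finset.card_le_card hsub
      _ ≤ (RB G x k).card + (SB G x (k+1)).card := Finset.card_union_le _ _
      _ ≤ _ := by rw [Finset.sum_range_succ]; omega

lemma SB_subset_biUnion (G : SimpleGraph W) (x : W) (ℓ : ℕ) :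
    SB G x (ℓ+1) ⊆ (SB G x ℓ).biUnion (nbrF G) := by
  intro y hy
  rw [SB, Finset.mem_sdiff] at hy
  obtain ⟨hy1, hy2⟩ := hy
  rw [RB, Finset.mem_union] at hy1
  rcases hy1 with hy1 | hy1
  · exact absurd hy1 hy2
  rw [Finset.mem_biUnion] at hy1
  obtain ⟨z, hz, hyz⟩ := hy1
  refine Finset.mem_biUnion.2 ⟨z, ?_, hyz⟩
  cases ℓ with
  | zero => simpa [SB, RB] using hz
  | succ j =>
    rw [SB, Finset.mem_sdiff]
    refine ⟨hz, fun hcon => hy2 ?_⟩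
    rw [RB]
    exact Finset.mem_union_right _ (Finset.mem_biUnion.2 ⟨z, hcon, hyz⟩)

lemma SB_pred (G : SimpleGraph W) (x : W) (ℓ : ℕ) {z : W} (hz : z ∈ SB G x (ℓ+1)) :
    ∃ z', G.Adj z z' ∧ z' ∈ RB G x ℓ := by
  rw [SB, Finset.mem_sdiff] at hz
  obtain ⟨hz1, hz2⟩ := hz
  rw [RB, Finset.mem_union] at hz1
  rcases hz1 with hz1 | hz1
  · exact absurd hz1 hz2
  rw [Finset.mem_biUnion] at hz1
  obtain ⟨z', hz', hzz⟩ := hz1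
  exact ⟨z', (mem_nbrF.1 hzz).symm, hz'⟩

lemma sum_biUnion_le'' {α β : Type*} [DecidableEq β] (s : Finset α) (t : α → Finset β)
    (f : β → ℕ) : ∑ y ∈ s.biUnion t, f y ≤ ∑ a ∈ s, ∑ y ∈ t a, f y := by
  classical
  induction s using Finset.induction_on with
  | empty => simp
  | insert _ _ hni ih =>
    rename_i a s
    rw [Finset.biUnion_insert, Finset.sum_insert hni]
    have hui := Finset.sum_union_inter (s₁ := t a) (s₂ := s.biUnion t) (f := f)
    omega

section BallBound

variable (G : SimpleGraph W) (w : W → ℕ) (D' c₂ : ℕ)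

lemma sum_w_le (hw1 : ∀ v, 1 ≤ w v) (hDp : ∀ v y, G.Adj v y → w v * w y ≤ D')
    (v : W) (F : Finset W) (hadj : F ⊆ nbrF G v) (hcard : F.card ≤ w v) :
    ∑ y ∈ F, w y ≤ D' := by
  have h2 : ∑ y ∈ F, w v * w y ≤ F.card * D' := by
    rw [← smul_eq_mul]
    exact Finset.sum_le_card_nsmul F _ D' (fun y hy => hDp v y (mem_nbrF.1 (hadj hy)))
  have h1 : w v * ∑ y ∈ F, w y ≤ w v * D' := by
    rw [Finset.mul_sum]
    exact h2.trans (Nat.mul_le_mul_right D' hcard)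
  exact Nat.le_of_mul_le_mul_left h1 (hw1 v)

variable (x : W)

lemma SB_refined (hdeg : ∀ v, (nbrF G v).card ≤ w v + 1) {ℓ : ℕ} (hℓ : 1 ≤ ℓ) :
    ∃ P : W → W, (∀ z ∈ SB G x ℓ, P z ∈ nbrF G z) ∧
      SB G x (ℓ+1) ⊆ (SB G x ℓ).biUnion (fun z => nbrF G z \ {P z}) := by
  classical
  obtain ⟨j, rfl⟩ : ∃ j, ℓ = j + 1 := ⟨ℓ - 1, by omega⟩
  set P : W → W := fun z => if h : ∃ z', G.Adj z z' ∧ z' ∈ RB G x j then h.choose else z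
    with hPdef
  have hPz : ∀ z, (∃ z', G.Adj z z' ∧ z' ∈ RB G x j) →
      G.Adj z (P z) ∧ P z ∈ RB G x j := by
    intro z h
    have : P z = h.choose := by simp only [hPdef]; rw [dif_pos h]
    rw [this]
    exact h.choose_spec
  refine ⟨P, ?_, ?_⟩
  · intro z hz
    exact mem_nbrF.2 (hPz z (SB_pred G x j hz)).1
  · intro y hy
    have hyR : y ∉ RB G x (j+1) := by
      rw [SB, Finset.mem_sdiff] at hy; exact hy.2
    obtain ⟨z, hz, hyz⟩ := Finset.mem_biUnion.1 (SB_subset_biUnion G x (j+1) hy)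
    have h : ∃ z', G.Adj z z' ∧ z' ∈ RB G x j := SB_pred G x j hz
    refine Finset.mem_biUnion.2 ⟨z, hz, Finset.mem_sdiff.2 ⟨hyz, ?_⟩⟩
    rw [Finset.mem_singleton]
    rintro rfl
    exact hyR (RB_mono G x (Nat.le_succ j) (hPz z h).2)

lemma card_SB_one_le : (SB G x 1).card ≤ (nbrF G x).card := by
  refine Finset.card_le_card ?_
  refine (SB_subset_biUnion G x 0).trans ?_
  intro y hy
  simpa [SB] using Finset.mem_biUnion.1 hy

lemma sum_SB_one_le (hw1 : ∀ v, 1 ≤ w v) (hdeg : ∀ v, (nbrF G v).card ≤ w v + 1)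
    (hDp : ∀ v y, G.Adj v y → w v * w y ≤ D') :
    ∑ y ∈ SB G x 1, w y ≤ 2 * D' := by
  have hsub : SB G x 1 ⊆ nbrF G x := by
    refine (SB_subset_biUnion G x 0).trans ?_
    intro y hy
    simpa [SB] using Finset.mem_biUnion.1 hy
  have h2 : ∑ y ∈ nbrF G x, w x * w y ≤ (nbrF G x).card * D' := by
    rw [← smul_eq_mul]
    exact Finset.sum_le_card_nsmul _ _ D' (fun y hy => hDp x y (mem_nbrF.1 hy))
  have h1 : w x * ∑ y ∈ nbrF G x, w y ≤ w x * (2 * D') := by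
    rw [Finset.mul_sum]
    refine h2.trans ?_
    calc (nbrF G x).card * D' ≤ (w x + 1) * D' := Nat.mul_le_mul_right D' (hdeg x)
      _ ≤ (w x * 2) * D' := Nat.mul_le_mul_right D' (by have := hw1 x; omega)
      _ = w x * (2 * D') := by ring
  have := Nat.le_of_mul_le_mul_left h1 (hw1 x)
  exact (Finset.sum_le_sum_of_subset hsub).trans this

lemma card_SB_succ (hw1 : ∀ v, 1 ≤ w v) (hdeg : ∀ v, (nbrF G v).card ≤ w v + 1)
    {ℓ : ℕ} (hℓ : 1 ≤ ℓ) :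
    (SB G x (ℓ+1)).card ≤ ∑ z ∈ SB G x ℓ, w z := by
  obtain ⟨P, hP1, hP2⟩ := SB_refined G w x hdeg hℓ
  calc (SB G x (ℓ+1)).card ≤ ((SB G x ℓ).biUnion (fun z => nbrF G z \ {P z})).card :=
        Finset.card_le_card hP2
    _ ≤ ∑ z ∈ SB G x ℓ, (nbrF G z \ {P z}).card := Finset.card_biUnion_le
    _ ≤ ∑ z ∈ SB G x ℓ, w z := by
        refine Finset.sum_le_sum (fun z hz => ?_)
        rw [Finset.card_sdiff_of_subset (by simpa using hP1 z hz)]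
        have := hdeg z
        simp only [Finset.card_singleton]
        omega

lemma sum_SB_succ (hw1 : ∀ v, 1 ≤ w v) (hdeg : ∀ v, (nbrF G v).card ≤ w v + 1)
    (hDp : ∀ v y, G.Adj v y → w v * w y ≤ D') {ℓ : ℕ} (hℓ : 1 ≤ ℓ) :
    ∑ y ∈ SB G x (ℓ+1), w y ≤ D' * (SB G x ℓ).card := by
  obtain ⟨P, hP1, hP2⟩ := SB_refined G w x hdeg hℓ
  calc ∑ y ∈ SB G x (ℓ+1), w y
      ≤ ∑ y ∈ (SB G x ℓ).biUnion (fun z => nbrF G z \ {P z}), w y :=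
        Finset.sum_le_sum_of_subset hP2
    _ ≤ ∑ z ∈ SB G x ℓ, ∑ y ∈ nbrF G z \ {P z}, w y := sum_biUnion_le'' _ _ _
    _ ≤ ∑ z ∈ SB G x ℓ, D' := by
        refine Finset.sum_le_sum (fun z hz => ?_)
        refine sum_w_le G w D' hw1 hDp z _ Finset.sdiff_subset ?_
        rw [Finset.card_sdiff_of_subset (by simpa using hP1 z hz)]
        have := hdeg z
        simp only [Finset.card_singleton]
        omega
    _ = D' * (SB G x ℓ).card := by rw [Finset.sum_const, smul_eq_mul, Nat.mul_comm]

lemma card_SB_le (hw1 : ∀ v, 1 ≤ w v) (hwD : ∀ v, w v ≤ D')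
    (hdeg : ∀ v, (nbrF G v).card ≤ w v + 1)
    (hDp : ∀ v y, G.Adj v y → w v * w y ≤ D') (hc2 : ∀ v, (nbrF G v).card ≤ c₂) :
    ∀ ℓ, (SB G x ℓ).card ≤ (c₂ + 2) * D' ^ ((ℓ+1)/2) := by
  have hD1 : 1 ≤ D' := le_trans (hw1 x) (hwD x)
  have key : ∀ ℓ, (SB G x ℓ).card ≤ (c₂ + 2) * D' ^ ((ℓ+1)/2) ∧
      (∑ y ∈ SB G x ℓ, w y) ≤ (c₂ + 2) * D' ^ (ℓ/2 + 1) := by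
    intro ℓ
    induction ℓ using Nat.strong_induction_on with
    | _ ℓ ih =>
      match ℓ with
      | 0 =>
        constructor
        · simpa [SB] using Nat.one_le_iff_ne_zero.2 (by positivity)
        · simp only [SB, Finset.sum_singleton, pow_one]
          calc w x ≤ D' := hwD x
            _ ≤ (c₂ + 2) * D' ^ (0/2 + 1) := by simpa using Nat.le_mul_of_pos_left _ (by omega)
      | 1 =>
        constructor
        · calc (SB G x 1).card ≤ (nbrF G x).card := card_SB_one_le G x
            _ ≤ c₂ := hc2 x
            _ ≤ (c₂ + 2) * D' ^ ((1+1)/2) := by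
                have h1 : 1 ≤ D' ^ ((1+1)/2) := Nat.one_le_pow _ _ (by omega)
                calc c₂ ≤ (c₂ + 2) * 1 := by omega
                  _ ≤ _ := Nat.mul_le_mul_left _ h1
        · calc (∑ y ∈ SB G x 1, w y) ≤ 2 * D' := sum_SB_one_le G w D' x hw1 hdeg hDp
            _ ≤ (c₂ + 2) * D' ^ (1/2 + 1) := by
                have h1 : D' ^ (1/2 + 1) = D' := by norm_num
                rw [h1]
                exact Nat.mul_le_mul_right D' (by omega)
      | (j+2) =>
        have ih1 := ih (j+1) (by omega)
        constructor
        · calc (SB G x (j+2)).card ≤ ∑ z ∈ SB G x (j+1), w z :=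
              card_SB_succ G w x hw1 hdeg (by omega)
            _ ≤ (c₂ + 2) * D' ^ ((j+1)/2 + 1) := ih1.2
            _ = (c₂ + 2) * D' ^ ((j+2+1)/2) := by
                have h1 : (j+1)/2 + 1 = (j+2+1)/2 := by omega
                rw [h1]
        · calc (∑ y ∈ SB G x (j+2), w y) ≤ D' * (SB G x (j+1)).card :=
              sum_SB_succ G w D' x hw1 hdeg hDp (by omega)
            _ ≤ D' * ((c₂ + 2) * D' ^ ((j+1+1)/2)) := Nat.mul_le_mul_left D' ih1.1
            _ = (c₂ + 2) * D' ^ ((j+2)/2 + 1) := by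
                rw [pow_succ]
                ring
  exact fun ℓ => (key ℓ).1

lemma geom_le (D' : ℕ) (hD2 : 2 ≤ D') : ∀ r, ∑ a ∈ Finset.range (r+1), D' ^ a ≤ 2 * D' ^ r := by
  intro r
  induction r with
  | zero => simp
  | succ r ih =>
    rw [Finset.sum_range_succ]
    have h1 := Nat.mul_le_mul_left (D' ^ r) hD2
    rw [pow_succ]
    omega

lemma Tsum_le (D' : ℕ) (hD2 : 2 ≤ D') : ∀ k,
    (∑ ℓ ∈ Finset.range (k+1), D' ^ ((ℓ+1)/2)) + (k % 2) * D' ^ ((k+1)/2)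
      ≤ 2 * ∑ a ∈ Finset.range ((k+1)/2 + 1), D' ^ a := by
  intro k
  induction k with
  | zero => simp
  | succ k ih =>
    rw [Finset.sum_range_succ]
    rcases Nat.even_or_odd k with he | ho
    · have hk0 := Nat.even_iff.mp he
      have h2 : (k+1+1)/2 = (k+1)/2 + 1 := by omega
      have h3 : (k+1) % 2 = 1 := by omega
      rw [h3, h2, Finset.sum_range_succ (f := fun a => D' ^ a) (n := (k+1)/2 + 1)]
      rw [hk0] at ih
      omega
    · have hk1 := Nat.odd_iff.mp ho
      have h2 : (k+1+1)/2 = (k+1)/2 := by omega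
      have h3 : (k+1) % 2 = 0 := by omega
      rw [h3, h2]
      rw [hk1] at ih
      omega

theorem card_RB_le (hD2 : 2 ≤ D') (hw1 : ∀ v, 1 ≤ w v) (hwD : ∀ v, w v ≤ D')
    (hdeg : ∀ v, (nbrF G v).card ≤ w v + 1)
    (hDp : ∀ v y, G.Adj v y → w v * w y ≤ D') (hc2 : ∀ v, (nbrF G v).card ≤ c₂)
    (k : ℕ) : (RB G x k).card ≤ 4 * (c₂ + 2) * D' ^ ((k+1)/2) := by
  calc (RB G x k).card ≤ ∑ ℓ ∈ Finset.range (k+1), (SB G x ℓ).card :=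
        card_RB_le_sum_SB G x k
    _ ≤ ∑ ℓ ∈ Finset.range (k+1), (c₂ + 2) * D' ^ ((ℓ+1)/2) :=
        Finset.sum_le_sum (fun ℓ _ => card_SB_le G w D' c₂ x hw1 hwD hdeg hDp hc2 ℓ)
    _ = (c₂ + 2) * ∑ ℓ ∈ Finset.range (k+1), D' ^ ((ℓ+1)/2) := by rw [Finset.mul_sum]
    _ ≤ (c₂ + 2) * (2 * ∑ a ∈ Finset.range ((k+1)/2 + 1), D' ^ a) := by
        refine Nat.mul_le_mul_left _ ?_
        have := Tsum_le D' hD2 k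
        omega
    _ ≤ (c₂ + 2) * (2 * (2 * D' ^ ((k+1)/2))) := by
        refine Nat.mul_le_mul_left _ (Nat.mul_le_mul_left _ ?_)
        exact geom_le D' hD2 _
    _ = 4 * (c₂ + 2) * D' ^ ((k+1)/2) := by ring

end BallBound


end Tanner
section SurgeryTest
open SimpleGraph Walk
namespace Tanner

variable {V : Type*}

lemma length_rotate' {G : SimpleGraph V} [DecidableEq V] {u v : V} (c : G.Walk v v)
    (h : u ∈ c.support) : (c.rotate u h).length = c.length := by
  have hd := (c.rotate_darts u h).perm.length_eq
  rwa [length_darts, length_darts] at hd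

lemma surgery_aux {G G' : SimpleGraph V} [DecidableEq V] {u v u2 v2 : V} {k : ℕ}
    (h1 : ∀ x y : V, G'.Adj x y → G.Adj x y ∨ s(x,y) = s(u,v2) ∨ s(x,y) = s(u2,v))
    (h2 : G.Adj u v) (h3 : G.Adj u2 v2)
    (h4 : ¬ G'.Adj u v) (h5 : ¬ G'.Adj u2 v2)
    (h6 : (k : ℕ∞) ≤ G.egirth)
    (huu2 : u ≠ u2) (huv2 : u ≠ v2)
    (hBuv2 : ∀ p : G.Walk u v2, k < p.length)
    (hBvu2 : ∀ p : G.Walk v u2, k < p.length)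
    (hBvv2 : ∀ p : G.Walk v v2, k < p.length)
    (hk : 1 ≤ k)
    {z : V} (c : G'.Walk z z) (hc : c.IsCycle) (hck : c.length ≤ k) :
    s(u,v2) ∉ c.edges := by
  intro he₁
  have h1e : ∀ e ∈ G'.edgeSet, e ∈ G.edgeSet ∨ e = s(u,v2) ∨ e = s(u2,v) := by
    intro e he
    induction e with
    | _ x y => exact h1 x y he
  have hu_sup : u ∈ c.support := c.fst_mem_support_of_mem_edges he₁
  set c₂ := c.rotate u hu_sup with hc₂def
  have hc₂ : c₂.IsCycle := hc.rotate hu_sup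
  have he₁' : s(u,v2) ∈ c₂.edges := ((c.rotate_edges u hu_sup).perm.mem_iff).2 he₁
  have hlen₂ : c₂.length = c.length := length_rotate' c hu_sup
  obtain ⟨p, hp, hpe₁, hplen⟩ := cycle_split c₂ hc₂ rfl he₁' huv2
  have hplen' : p.length + 1 ≤ k := by omega
  by_cases he₂ : s(u2,v) ∈ p.edges
  · obtain ⟨a, b, hab, α, β, hαp, hβp, heα, heβ, hαs, hβs, hαsup, hlen⟩ :=
      path_split p hp he₂
    have hsplit := Sym2.eq_iff.mp hab
    rcases hsplit with ⟨ha, hb⟩ | ⟨ha, hb⟩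
    · -- a = u2, b = v
      subst ha; subst hb
      have hαe : ∀ e ∈ α.edges, e ∈ G.edgeSet := by
        intro e he
        rcases h1e e (α.edges_subset_edgeSet he) with h | h | h
        · exact h
        · exact absurd (h ▸ he) (fun hco => hpe₁ (hαs _ hco))
        · exact absurd (h ▸ he) heα
      have hβe : ∀ e ∈ β.edges, e ∈ G.edgeSet := by
        intro e he
        rcases h1e e (β.edges_subset_edgeSet he) with h | h | h
        · exact h
        · exact absurd (h ▸ he) (fun hco => hpe₁ (hβs _ hco))
        · exact absurd (h ▸ he) heβ
      set αG := α.transfer G hαe with hαGdef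
      set βG := β.transfer G hβe with hβGdef
      have hcyc1 : (Walk.cons h3 αG).IsCycle := by
        rw [cons_isCycle_iff]
        refine ⟨hαp.transfer hαe, fun hco => ?_⟩
        rw [edges_transfer] at hco
        exact h5 (α.edges_subset_edgeSet hco)
      have hcyc2 : (Walk.cons h2 βG).IsCycle := by
        rw [cons_isCycle_iff]
        refine ⟨hβp.transfer hβe, fun hco => ?_⟩
        rw [edges_transfer] at hco
        exact h4 (β.edges_subset_edgeSet hco)
      have hk1 : (k : ℕ∞) ≤ (Walk.cons h3 αG).length := le_egirth.mp h6 _ _ hcyc1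
      have hk2 : (k : ℕ∞) ≤ (Walk.cons h2 βG).length := le_egirth.mp h6 _ _ hcyc2
      rw [Nat.cast_le] at hk1 hk2
      rw [length_cons] at hk1 hk2
      have hα_len : αG.length = α.length := length_transfer _ _
      have hβ_len : βG.length = β.length := length_transfer _ _
      omega
    · -- a = v, b = u2
      subst ha; subst hb
      have hαe : ∀ e ∈ α.edges, e ∈ G.edgeSet := by
        intro e he
        rcases h1e e (α.edges_subset_edgeSet he) with h | h | h
        · exact h
        · exact absurd (h ▸ he) (fun hco => hpe₁ (hαs _ hco))
        · exact absurd (h ▸ he) heα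
      have := hBvv2 ((α.transfer G hαe).reverse)
      rw [length_reverse, length_transfer] at this
      omega
  · have hpe : ∀ e ∈ p.edges, e ∈ G.edgeSet := by
      intro e he
      rcases h1e e (p.edges_subset_edgeSet he) with h | h | h
      · exact h
      · exact absurd (h ▸ he) hpe₁
      · exact absurd (h ▸ he) he₂
    have := hBuv2 ((p.transfer G hpe).reverse)
    rw [length_reverse, length_transfer] at this
    omega

lemma surgery {G G' : SimpleGraph V} [DecidableEq V] {u v u2 v2 : V} {k : ℕ}
    (h1 : ∀ x y : V, G'.Adj x y → G.Adj x y ∨ s(x,y) = s(u,v2) ∨ s(x,y) = s(u2,v))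
    (h2 : G.Adj u v) (h3 : G.Adj u2 v2)
    (h4 : ¬ G'.Adj u v) (h5 : ¬ G'.Adj u2 v2)
    (h6 : (k : ℕ∞) ≤ G.egirth)
    (huu2 : u ≠ u2) (huv2 : u ≠ v2) (hu2v : u2 ≠ v)
    (hBuu2 : ∀ p : G.Walk u u2, k < p.length)
    (hBuv2 : ∀ p : G.Walk u v2, k < p.length)
    (hBvu2 : ∀ p : G.Walk v u2, k < p.length)
    (hBvv2 : ∀ p : G.Walk v v2, k < p.length)
    (hk : 1 ≤ k)
    {z : V} (c : G'.Walk z z) (hc : c.IsCycle) (hck : c.length ≤ k) :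
    s(u,v2) ∉ c.edges ∧ s(u2,v) ∉ c.edges := by
  constructor
  · exact surgery_aux h1 h2 h3 h4 h5 h6 huu2 huv2 hBuv2 hBvu2 hBvv2 hk c hc hck
  · refine surgery_aux (u := u2) (v := v2) (u2 := u) (v2 := v)
      (fun x y ha => by rcases h1 x y ha with h | h | h <;> tauto)
      h3 h2 h5 h4 h6 huu2.symm hu2v
      (fun p => by simpa [length_reverse] using hBvu2 p.reverse)
      (fun p => by simpa [length_reverse] using hBuv2 p.reverse)
      (fun p => by simpa [length_reverse] using hBvv2 p.reverse)
      hk c hc hck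

end Tanner
end SurgeryTest
section TannerSpecific
open SimpleGraph Walk
namespace Tanner

variable {J L M : ℕ}

/-- vertex type of the Tanner graph -/
abbrev VT (J M L : ℕ) := (Fin (L + J) × Fin 2 × Fin M) ⊕ (Fin (L + 2 * J - 1) × Fin M)

lemma tanner_adj_iff (π : Fin J → Fin 2 → Fin (L + J) → Equiv.Perm (Fin M))
    {t : Fin (L+J)} {b : Fin 2} {m : Fin M} {s : Fin (L + 2*J - 1)} {m' : Fin M} :
    (tannerGraph J M L π).Adj (Sum.inl (t,b,m)) (Sum.inr (s,m')) ↔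
      ∃ i : Fin J, (s : ℕ) = (t : ℕ) + (i : ℕ) ∧ m' = π i b t m := by
  rw [tannerGraph, SimpleGraph.fromRel_adj]
  constructor
  · rintro ⟨-, h | h⟩
    · exact h
    · exact h.elim
  · intro h
    exact ⟨by simp, Or.inl h⟩

lemma tanner_adj_shape {π : Fin J → Fin 2 → Fin (L + J) → Equiv.Perm (Fin M)}
    {x y : VT J M L} (hxy : (tannerGraph J M L π).Adj x y) :
    (∃ a c, x = Sum.inl a ∧ y = Sum.inr c) ∨ (∃ a c, x = Sum.inr a ∧ y = Sum.inl c) := by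
  rw [tannerGraph, SimpleGraph.fromRel_adj] at hxy
  obtain ⟨-, h⟩ := hxy
  rcases x with ⟨t, b, m⟩ | ⟨s, n⟩ <;> rcases y with ⟨t', b', m'⟩ | ⟨s', n'⟩
  · rcases h with h | h <;> exact h.elim
  · exact Or.inl ⟨_, _, rfl, rfl⟩
  · exact Or.inr ⟨_, _, rfl, rfl⟩
  · rcases h with h | h <;> exact h.elim

lemma tanner_nbr_inl (π : Fin J → Fin 2 → Fin (L + J) → Equiv.Perm (Fin M))
    (hJ : 1 ≤ J) (t : Fin (L+J)) (b : Fin 2) (m : Fin M) :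
    (nbrF (tannerGraph J M L π) (Sum.inl (t,b,m))).card ≤ J := by
  classical
  have hsub : nbrF (tannerGraph J M L π) (Sum.inl (t,b,m)) ⊆
      (Finset.univ : Finset (Fin J)).image
        (fun (i : Fin J) => (Sum.inr (⟨(t : ℕ) + (i : ℕ), by have := t.isLt; have := i.isLt; omega⟩,
          π i b t m) : VT J M L)) := by
    intro y hy
    have hadj := mem_nbrF.1 hy
    rcases tanner_adj_shape hadj with ⟨a, c, hx, hy'⟩ | ⟨a, c, hx, hy'⟩
    · obtain ⟨s, m'⟩ := c
      subst hy'
      obtain ⟨i, hi1, hi2⟩ := (tanner_adj_iff π).1 (by exact_mod_cast hadj)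
      refine Finset.mem_image.2 ⟨i, Finset.mem_univ _, ?_⟩
      subst hi2
      congr 1
      exact Prod.ext (Fin.ext hi1.symm) rfl
    · exact absurd hx (by simp)
  calc _ ≤ _ := Finset.card_le_card hsub
    _ ≤ (Finset.univ : Finset (Fin J)).card := Finset.card_image_le
    _ = J := by simp

lemma tanner_nbr_inr (π : Fin J → Fin 2 → Fin (L + J) → Equiv.Perm (Fin M))
    (hJ : 1 ≤ J) (s : Fin (L + 2*J - 1)) (n : Fin M) :
    (nbrF (tannerGraph J M L π) (Sum.inr (s,n))).card ≤ 2 * J := by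
  classical
  have hsub : nbrF (tannerGraph J M L π) (Sum.inr (s,n)) ⊆
      (Finset.univ : Finset (Fin J × Fin 2)).image
        (fun (q : Fin J × Fin 2) => if h : (q.1 : ℕ) ≤ (s : ℕ) ∧ (s : ℕ) - (q.1 : ℕ) < L + J then
            (Sum.inl (⟨(s : ℕ) - (q.1 : ℕ), h.2⟩, q.2,
              (π q.1 q.2 ⟨(s : ℕ) - (q.1 : ℕ), h.2⟩).symm n) : VT J M L)
          else Sum.inr (s, n)) := by
    intro y hy
    have hadj := mem_nbrF.1 hy
    rcases tanner_adj_shape hadj with ⟨a, c, hx, hy'⟩ | ⟨a, c, hx, hy'⟩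
    · exact absurd hx (by simp)
    · obtain ⟨t, b, m⟩ := c
      subst hy'
      have hadj' : (tannerGraph J M L π).Adj (Sum.inl (t,b,m)) (Sum.inr (s,n)) := hadj.symm
      obtain ⟨i, hi1, hi2⟩ := (tanner_adj_iff π).1 hadj'
      refine Finset.mem_image.2 ⟨(i, b), Finset.mem_univ _, ?_⟩
      have hcond : (i : ℕ) ≤ (s : ℕ) ∧ (s : ℕ) - (i : ℕ) < L + J := by
        have := t.isLt; omega
      rw [dif_pos hcond]
      have hts : (⟨(s : ℕ) - (i : ℕ), hcond.2⟩ : Fin (L + J)) = t :=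
        Fin.ext (show (s : ℕ) - (i : ℕ) = (t : ℕ) by omega)
      rw [hts]
      congr 1
      refine Prod.ext rfl (Prod.ext rfl ?_)
      simp only
      rw [hi2]
      exact Equiv.symm_apply_apply _ _
  calc _ ≤ _ := Finset.card_le_card hsub
    _ ≤ (Finset.univ : Finset (Fin J × Fin 2)).card := Finset.card_image_le
    _ = 2 * J := by simp [Nat.mul_comm]

/-- the weight function on Tanner graph vertices -/
def wtf (J M L : ℕ) : VT J M L → ℕ := Sum.elim (fun _ => J - 1) (fun _ => 2*J - 1)

lemma tanner_ball_bound (π : Fin J → Fin 2 → Fin (L + J) → Equiv.Perm (Fin M))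
    (hJ : 3 ≤ J) (x : VT J M L) (k : ℕ) :
    (RB (tannerGraph J M L π) x k).card ≤
      4 * (2*J + 2) * ((2*J - 1) * (J - 1)) ^ ((k+1)/2) := by
  classical
  have hD10 : 10 ≤ (2*J - 1) * (J - 1) :=
    le_trans (show (10:ℕ) ≤ 5 * 2 by norm_num)
      (Nat.mul_le_mul (show 5 ≤ 2*J-1 by omega) (show 2 ≤ J-1 by omega))
  refine card_RB_le (tannerGraph J M L π) (wtf J M L) ((2*J - 1) * (J - 1)) (2*J) x ?_ ?_ ?_ ?_ ?_ ?_ k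
  · omega
  · rintro (a | a) <;> simp only [wtf, Sum.elim_inl, Sum.elim_inr] <;> omega
  · rintro (a | a) <;> simp only [wtf, Sum.elim_inl, Sum.elim_inr]
    · exact Nat.le_mul_of_pos_left (J - 1) (by omega)
    · exact Nat.le_mul_of_pos_right (2*J - 1) (by omega)
  · rintro (⟨t, b, m⟩ | ⟨s, n⟩)
    · have := tanner_nbr_inl π (by omega) t b m
      simp only [wtf, Sum.elim_inl]
      omega
    · have := tanner_nbr_inr π (by omega) s n
      simp only [wtf, Sum.elim_inr]
      omega
  · intro v y hadj
    rcases tanner_adj_shape hadj with ⟨a, c, hx, hy'⟩ | ⟨a, c, hx, hy'⟩ <;> subst hx <;> subst hy'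
    · simp only [wtf, Sum.elim_inl, Sum.elim_inr]
      exact le_of_eq (Nat.mul_comm _ _)
    · simp only [wtf, Sum.elim_inl, Sum.elim_inr]
      exact le_refl _
  · rintro (⟨t, b, m⟩ | ⟨s, n⟩)
    · have := tanner_nbr_inl π (by omega) t b m
      omega
    · exact tanner_nbr_inr π (by omega) s n

end Tanner
end TannerSpecific
section StepPart
open SimpleGraph Walk
namespace Tanner

variable {W : Type*} [Fintype W] [DecidableEq W]

open Classical in
/-- supports of cycles of length `k` -/
noncomputable def cycSupports (G : SimpleGraph W) (k : ℕ) : Finset (List W) :=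
  (Finset.univ : Finset W).biUnion (fun z =>
    ((G.finsetWalkLength k z z).filter (fun w => w.IsCycle)).image (fun w => w.support))

lemma mem_cycSupports {G : SimpleGraph W} {k : ℕ} {l : List W} :
    l ∈ cycSupports G k ↔
      ∃ (z : W) (w : G.Walk z z), w.IsCycle ∧ w.length = k ∧ w.support = l := by
  classical
  unfold cycSupports
  rw [Finset.mem_biUnion]
  constructor
  · rintro ⟨z, -, hl⟩
    rw [Finset.mem_image] at hl
    obtain ⟨w, hw, hws⟩ := hl
    rw [Finset.mem_filter, SimpleGraph.mem_finsetWalkLength_iff] at hw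
    exact ⟨z, w, hw.2, hw.1, hws⟩
  · rintro ⟨z, w, hcyc, hlen, hsup⟩
    refine ⟨z, Finset.mem_univ _, Finset.mem_image.2 ⟨w, ?_, hsup⟩⟩
    rw [Finset.mem_filter, SimpleGraph.mem_finsetWalkLength_iff]
    exact ⟨hlen, hcyc⟩

variable {J L M : ℕ}

/-- the swapped permutation family -/
def swapPerm (π : Fin J → Fin 2 → Fin (L + J) → Equiv.Perm (Fin M))
    (i₀ : Fin J) (b₀ : Fin 2) (t₀ : Fin (L + J)) (m mb : Fin M) :
    Fin J → Fin 2 → Fin (L + J) → Equiv.Perm (Fin M) :=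
  fun i b t => if i = i₀ ∧ b = b₀ ∧ t = t₀
    then Equiv.swap (π i₀ b₀ t₀ m) (π i₀ b₀ t₀ mb) * π i₀ b₀ t₀
    else π i b t

lemma swapPerm_eq_of_ne (π : Fin J → Fin 2 → Fin (L + J) → Equiv.Perm (Fin M))
    {i₀ : Fin J} {b₀ : Fin 2} {t₀ : Fin (L + J)} {m mb : Fin M}
    {i : Fin J} {b : Fin 2} {t : Fin (L + J)} (h : ¬(i = i₀ ∧ b = b₀ ∧ t = t₀)) :
    swapPerm π i₀ b₀ t₀ m mb i b t = π i b t := by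
  rw [swapPerm, if_neg h]

lemma swapPerm_apply (π : Fin J → Fin 2 → Fin (L + J) → Equiv.Perm (Fin M))
    (i₀ : Fin J) (b₀ : Fin 2) (t₀ : Fin (L + J)) (m mb : Fin M) (x : Fin M) :
    swapPerm π i₀ b₀ t₀ m mb i₀ b₀ t₀ x =
      Equiv.swap (π i₀ b₀ t₀ m) (π i₀ b₀ t₀ mb) (π i₀ b₀ t₀ x) := by
  rw [swapPerm, if_pos ⟨rfl, rfl, rfl⟩]
  rfl

lemma swapPerm_m (π : Fin J → Fin 2 → Fin (L + J) → Equiv.Perm (Fin M))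
    (i₀ : Fin J) (b₀ : Fin 2) (t₀ : Fin (L + J)) (m mb : Fin M) :
    swapPerm π i₀ b₀ t₀ m mb i₀ b₀ t₀ m = π i₀ b₀ t₀ mb := by
  rw [swapPerm_apply, Equiv.swap_apply_left]

lemma swapPerm_mb (π : Fin J → Fin 2 → Fin (L + J) → Equiv.Perm (Fin M))
    (i₀ : Fin J) (b₀ : Fin 2) (t₀ : Fin (L + J)) (m mb : Fin M) :
    swapPerm π i₀ b₀ t₀ m mb i₀ b₀ t₀ mb = π i₀ b₀ t₀ m := by
  rw [swapPerm_apply, Equiv.swap_apply_right]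

lemma swapPerm_other (π : Fin J → Fin 2 → Fin (L + J) → Equiv.Perm (Fin M))
    (i₀ : Fin J) (b₀ : Fin 2) (t₀ : Fin (L + J)) (m mb : Fin M) {x : Fin M}
    (hx1 : x ≠ m) (hx2 : x ≠ mb) :
    swapPerm π i₀ b₀ t₀ m mb i₀ b₀ t₀ x = π i₀ b₀ t₀ x := by
  rw [swapPerm_apply, Equiv.swap_apply_of_ne_of_ne]
  · exact fun h => hx1 ((π i₀ b₀ t₀).injective h)
  · exact fun h => hx2 ((π i₀ b₀ t₀).injective h)

end Tanner
end StepPart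
section StepPart2
open SimpleGraph Walk
namespace Tanner

variable {J L M : ℕ}

lemma transfer_avoid {V : Type*} {G G' : SimpleGraph V} {u v2 u2 v : V}
    (h1 : ∀ x y : V, G'.Adj x y → G.Adj x y ∨ s(x,y) = s(u,v2) ∨ s(x,y) = s(u2,v))
    {a b : V} (c : G'.Walk a b) (hne1 : s(u,v2) ∉ c.edges) (hne2 : s(u2,v) ∉ c.edges) :
    ∀ e ∈ c.edges, e ∈ G.edgeSet := by
  intro e he
  have he' : e ∈ G'.edgeSet := c.edges_subset_edgeSet he
  induction e with
  | _ x y =>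
    rcases h1 x y he' with h | h | h
    · exact h
    · exact absurd (h ▸ he) hne1
    · exact absurd (h ▸ he) hne2

section SwapAdj

variable (π : Fin J → Fin 2 → Fin (L + J) → Equiv.Perm (Fin M))
  (i₀ : Fin J) (b₀ : Fin 2) (t₀ : Fin (L + J)) (m mb : Fin M)
  (s₀ : Fin (L + 2*J - 1))

lemma swap_adj_new_aux (hs₀ : (s₀ : ℕ) = (t₀ : ℕ) + (i₀ : ℕ))
    {t : Fin (L+J)} {b : Fin 2} {mm : Fin M}
    {s : Fin (L + 2*J - 1)} {m' : Fin M}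
    (h : (tannerGraph J M L (swapPerm π i₀ b₀ t₀ m mb)).Adj (Sum.inl (t,b,mm)) (Sum.inr (s,m'))) :
    (tannerGraph J M L π).Adj (Sum.inl (t,b,mm)) (Sum.inr (s,m')) ∨
      (Sum.inl (t,b,mm) : VT J M L) = Sum.inl (t₀,b₀,m) ∧
        (Sum.inr (s,m') : VT J M L) = Sum.inr (s₀, π i₀ b₀ t₀ mb) ∨
      (Sum.inl (t,b,mm) : VT J M L) = Sum.inl (t₀,b₀,mb) ∧
        (Sum.inr (s,m') : VT J M L) = Sum.inr (s₀, π i₀ b₀ t₀ m) := by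
  obtain ⟨i, hi, hm'⟩ := (tanner_adj_iff _).1 h
  by_cases htriple : i = i₀ ∧ b = b₀ ∧ t = t₀
  · obtain ⟨rfl, rfl, rfl⟩ := htriple
    have hss : s = s₀ := Fin.ext (by omega)
    by_cases hxm : mm = m
    · subst hxm
      rw [swapPerm_m] at hm'
      right; left
      subst hm'; subst hss
      exact ⟨rfl, rfl⟩
    · by_cases hxmb : mm = mb
      · subst hxmb
        rw [swapPerm_mb] at hm'
        right; right
        subst hm'; subst hss
        exact ⟨rfl, rfl⟩
      · rw [swapPerm_other π _ _ _ _ _ hxm hxmb] at hm'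
        left
        exact (tanner_adj_iff π).2 ⟨i, hi, hm'⟩
  · rw [swapPerm_eq_of_ne π htriple] at hm'
    left
    exact (tanner_adj_iff π).2 ⟨i, hi, hm'⟩

lemma swap_adj_new (hs₀ : (s₀ : ℕ) = (t₀ : ℕ) + (i₀ : ℕ)) :
    ∀ x y : VT J M L, (tannerGraph J M L (swapPerm π i₀ b₀ t₀ m mb)).Adj x y →
      (tannerGraph J M L π).Adj x y ∨
        s(x,y) = s((Sum.inl (t₀,b₀,m) : VT J M L), (Sum.inr (s₀, π i₀ b₀ t₀ mb) : VT J M L)) ∨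
        s(x,y) = s((Sum.inl (t₀,b₀,mb) : VT J M L), (Sum.inr (s₀, π i₀ b₀ t₀ m) : VT J M L)) := by
  intro x y hxy
  rcases tanner_adj_shape hxy with ⟨a0, c0, hx, hy⟩ | ⟨a0, c0, hx, hy⟩
  · subst hx; subst hy
    obtain ⟨t, b, mm⟩ := a0
    obtain ⟨s, m'⟩ := c0
    rcases swap_adj_new_aux π i₀ b₀ t₀ m mb s₀ hs₀ hxy with h | ⟨h1, h2⟩ | ⟨h1, h2⟩
    · exact Or.inl h
    · right; left; rw [h1, h2]
    · right; right; rw [h1, h2]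
  · subst hx; subst hy
    obtain ⟨t, b, mm⟩ := c0
    obtain ⟨s, m'⟩ := a0
    rcases swap_adj_new_aux π i₀ b₀ t₀ m mb s₀ hs₀ hxy.symm with h | ⟨h1, h2⟩ | ⟨h1, h2⟩
    · exact Or.inl h.symm
    · right; left; rw [h1, h2, Sym2.eq_swap]
    · right; right; rw [h1, h2, Sym2.eq_swap]

lemma swap_not_adj_uv (hs₀ : (s₀ : ℕ) = (t₀ : ℕ) + (i₀ : ℕ)) (hmb : mb ≠ m) :
    ¬ (tannerGraph J M L (swapPerm π i₀ b₀ t₀ m mb)).Adj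
      (Sum.inl (t₀,b₀,m)) (Sum.inr (s₀, π i₀ b₀ t₀ m)) := by
  intro h
  obtain ⟨i, hi, hm'⟩ := (tanner_adj_iff _).1 h
  have hii : i = i₀ := Fin.ext (by omega)
  subst hii
  rw [swapPerm_m] at hm'
  exact hmb ((π i b₀ t₀).injective hm'.symm)

lemma swap_not_adj_u2v2 (hs₀ : (s₀ : ℕ) = (t₀ : ℕ) + (i₀ : ℕ)) (hmb : mb ≠ m) :
    ¬ (tannerGraph J M L (swapPerm π i₀ b₀ t₀ m mb)).Adj
      (Sum.inl (t₀,b₀,mb)) (Sum.inr (s₀, π i₀ b₀ t₀ mb)) := by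
  intro h
  obtain ⟨i, hi, hm'⟩ := (tanner_adj_iff _).1 h
  have hii : i = i₀ := Fin.ext (by omega)
  subst hii
  rw [swapPerm_mb] at hm'
  exact hmb ((π i b₀ t₀).injective hm')

end SwapAdj

end Tanner
end StepPart2
section StepPart3
open SimpleGraph Walk
namespace Tanner

variable {J L M : ℕ}

lemma step_lemma (hJ : 3 ≤ J) {k : ℕ} (hk : 3 ≤ k)
    (hM : 16*(2*J+2)*((2*J-1)*(J-1))^((k+1)/2) + 1 ≤ M)
    (hex : ∃ π : Fin J → Fin 2 → Fin (L+J) → Equiv.Perm (Fin M),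
      (k : ℕ∞) ≤ (tannerGraph J M L π).egirth) :
    ∃ π : Fin J → Fin 2 → Fin (L+J) → Equiv.Perm (Fin M),
      ((k+1 : ℕ) : ℕ∞) ≤ (tannerGraph J M L π).egirth := by
  classical
  obtain ⟨π₀, hπ₀⟩ := hex
  set S := (Finset.univ : Finset (Fin J → Fin 2 → Fin (L+J) → Equiv.Perm (Fin M))).filter
      (fun π => (k:ℕ∞) ≤ (tannerGraph J M L π).egirth) with hSdef
  have hS0 : π₀ ∈ S := by rw [hSdef, Finset.mem_filter]; exact ⟨Finset.mem_univ _, hπ₀⟩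
  obtain ⟨π, hπS, hmin⟩ := Finset.exists_min_image S
    (fun π => (cycSupports (tannerGraph J M L π) k).card) ⟨π₀, hS0⟩
  have hgirth : (k:ℕ∞) ≤ (tannerGraph J M L π).egirth := by
    rw [hSdef, Finset.mem_filter] at hπS; exact hπS.2
  by_cases hempty : cycSupports (tannerGraph J M L π) k = ∅
  · refine ⟨π, ?_⟩
    rw [le_egirth]
    intro a w hw
    have hk' : k ≤ w.length := by
      have := le_egirth.mp hgirth a w hw
      exact_mod_cast this
    rcases Nat.lt_or_ge k w.length with h | h
    · exact_mod_cast h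
    · exfalso
      have hkl : w.length = k := le_antisymm h hk'
      have : w.support ∈ cycSupports (tannerGraph J M L π) k :=
        mem_cycSupports.2 ⟨a, w, hw, hkl, rfl⟩
      rw [hempty] at this
      simp at this
  · exfalso
    obtain ⟨l, hl⟩ := Finset.nonempty_iff_ne_empty.2 hempty
    obtain ⟨z, w, hwcyc, hwlen, hwsup⟩ := mem_cycSupports.1 hl
    -- extract a symbol-check edge from the cycle
    obtain ⟨t₀, b₀, m, s₀, i₀, hs₀, hedge⟩ :
        ∃ (t₀ : Fin (L+J)) (b₀ : Fin 2) (m : Fin M) (s₀ : Fin (L + 2*J - 1)) (i₀ : Fin J),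
          (s₀ : ℕ) = (t₀ : ℕ) + (i₀ : ℕ) ∧
          s((Sum.inl (t₀,b₀,m) : VT J M L), (Sum.inr (s₀, π i₀ b₀ t₀ m) : VT J M L))
            ∈ w.edges := by
      cases w with
      | nil => simp at hwlen; omega
      | cons hadj q =>
        rename_i z₁
        rcases tanner_adj_shape hadj with ⟨a0, c0, hx, hy⟩ | ⟨a0, c0, hx, hy⟩
        · obtain ⟨t₀, b₀, m⟩ := a0
          obtain ⟨s₀, m'⟩ := c0
          rw [hx, hy] at hadj
          obtain ⟨i₀, hi, hm'⟩ := (tanner_adj_iff π).1 hadj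
          refine ⟨t₀, b₀, m, s₀, i₀, hi, ?_⟩
          rw [← hm', ← hx, ← hy]
          rw [edges_cons]
          exact List.mem_cons_self
        · obtain ⟨t₀, b₀, m⟩ := c0
          obtain ⟨s₀, m'⟩ := a0
          rw [hx, hy] at hadj
          obtain ⟨i₀, hi, hm'⟩ := (tanner_adj_iff π).1 hadj.symm
          refine ⟨t₀, b₀, m, s₀, i₀, hi, ?_⟩
          rw [← hm', ← hx, ← hy, Sym2.eq_swap]
          rw [edges_cons]
          exact List.mem_cons_self
    set u : VT J M L := Sum.inl (t₀,b₀,m) with hu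
    set v : VT J M L := Sum.inr (s₀, π i₀ b₀ t₀ m) with hv
    have hadj_uv : (tannerGraph J M L π).Adj u v := by
      rw [← SimpleGraph.mem_edgeSet]
      exact w.edges_subset_edgeSet hedge
    -- the bad set of candidates
    set X := ((2*J-1)*(J-1))^((k+1)/2) with hX
    have hβeq : 16*(2*J+2)*X = 4*(4*(2*J+2)*X) := by ring
    set BU := RB (tannerGraph J M L π) u k ∪ RB (tannerGraph J M L π) v k with hBU
    have hBUcard : BU.card ≤ 2*(4*(2*J+2)*X) := by
      calc BU.card ≤ (RB (tannerGraph J M L π) u k).card +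
          (RB (tannerGraph J M L π) v k).card := Finset.card_union_le _ _
        _ ≤ _ := by
            have h1 := tanner_ball_bound π hJ u k
            have h2 := tanner_ball_bound π hJ v k
            rw [← hX] at h1 h2
            omega
    set badF := (Finset.univ : Finset (Fin M)).filter
      (fun mb => (Sum.inl (t₀,b₀,mb) : VT J M L) ∈ BU ∨
        (Sum.inr (s₀, π i₀ b₀ t₀ mb) : VT J M L) ∈ BU) with hbadF
    have hbadcard : badF.card ≤ 2 * BU.card := by
      have hsub : badF ⊆
          ((Finset.univ : Finset (Fin M)).filter
            (fun mb => (Sum.inl (t₀,b₀,mb) : VT J M L) ∈ BU)) ∪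
          ((Finset.univ : Finset (Fin M)).filter
            (fun mb => (Sum.inr (s₀, π i₀ b₀ t₀ mb) : VT J M L) ∈ BU)) := by
        intro mb hmb
        rw [hbadF, Finset.mem_filter] at hmb
        rcases hmb.2 with h | h
        · exact Finset.mem_union_left _ (Finset.mem_filter.2 ⟨Finset.mem_univ _, h⟩)
        · exact Finset.mem_union_right _ (Finset.mem_filter.2 ⟨Finset.mem_univ _, h⟩)
      have hc1 : ((Finset.univ : Finset (Fin M)).filter
          (fun mb => (Sum.inl (t₀,b₀,mb) : VT J M L) ∈ BU)).card ≤ BU.card := by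
        refine Finset.card_le_card_of_injOn (fun mb => (Sum.inl (t₀,b₀,mb) : VT J M L)) ?_ ?_
        · intro mb hmb
          exact (Finset.mem_filter.1 hmb).2
        · intro a _ b _ hab
          simpa using hab
      have hc2 : ((Finset.univ : Finset (Fin M)).filter
          (fun mb => (Sum.inr (s₀, π i₀ b₀ t₀ mb) : VT J M L) ∈ BU)).card ≤ BU.card := by
        refine Finset.card_le_card_of_injOn
          (fun mb => (Sum.inr (s₀, π i₀ b₀ t₀ mb) : VT J M L)) ?_ ?_
        · intro mb hmb
          exact (Finset.mem_filter.1 hmb).2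
        · intro a _ b _ hab
          simp only [Sum.inr.injEq, Prod.mk.injEq] at hab
          exact (π i₀ b₀ t₀).injective hab.2
      calc badF.card ≤ _ := Finset.card_le_card hsub
        _ ≤ _ + _ := Finset.card_union_le _ _
        _ ≤ 2 * BU.card := by omega
    -- pick a good mb
    have hbadlt : badF.card < M := by
      omega
    obtain ⟨mb, hmbgood⟩ : ∃ mb : Fin M, mb ∉ badF := by
      by_contra hcon
      push_neg at hcon
      have : (Finset.univ : Finset (Fin M)) ⊆ badF := fun mb _ => hcon mb
      have := Finset.card_le_card this
      simp only [Finset.card_univ, Fintype.card_fin] at this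
      omega
    rw [hbadF, Finset.mem_filter, not_and_or] at hmbgood
    have hmbgood' : ¬((Sum.inl (t₀,b₀,mb) : VT J M L) ∈ BU ∨
        (Sum.inr (s₀, π i₀ b₀ t₀ mb) : VT J M L) ∈ BU) := by
      rcases hmbgood with h | h
      · exact absurd (Finset.mem_univ _) h
      · exact h
    push_neg at hmbgood'
    obtain ⟨hu2BU, hv2BU⟩ := hmbgood'
    set u2 : VT J M L := Sum.inl (t₀,b₀,mb) with hu2
    set v2 : VT J M L := Sum.inr (s₀, π i₀ b₀ t₀ mb) with hv2
    have hmb_ne : mb ≠ m := by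
      rintro rfl
      exact hu2BU (Finset.mem_union_left _ (x_mem_RB _ u k))
    -- the swapped graph
    set π' := swapPerm π i₀ b₀ t₀ m mb with hπ'
    have h1 := swap_adj_new π i₀ b₀ t₀ m mb s₀ hs₀
    have h4 : ¬ (tannerGraph J M L π').Adj u v := swap_not_adj_uv π i₀ b₀ t₀ m mb s₀ hs₀ hmb_ne
    have h5 : ¬ (tannerGraph J M L π').Adj u2 v2 :=
      swap_not_adj_u2v2 π i₀ b₀ t₀ m mb s₀ hs₀ hmb_ne
    have hadj_u2v2 : (tannerGraph J M L π).Adj u2 v2 :=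
      (tanner_adj_iff π).2 ⟨i₀, hs₀, rfl⟩
    have hne_uu2 : u ≠ u2 := by
      rw [hu, hu2]
      simp only [ne_eq, Sum.inl.injEq, Prod.mk.injEq]
      tauto
    have hne_uv2 : u ≠ v2 := by rw [hu, hv2]; simp
    have hne_u2v : u2 ≠ v := by rw [hu2, hv]; simp
    -- ball conditions as walk-length bounds
    have hBuu2 : ∀ p : (tannerGraph J M L π).Walk u u2, k < p.length := by
      intro p
      by_contra hcon
      push_neg at hcon
      exact hu2BU (Finset.mem_union_left _ (mem_RB_of_walk' _ p hcon))
    have hBuv2 : ∀ p : (tannerGraph J M L π).Walk u v2, k < p.length := by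
      intro p
      by_contra hcon
      push_neg at hcon
      exact hv2BU (Finset.mem_union_left _ (mem_RB_of_walk' _ p hcon))
    have hBvu2 : ∀ p : (tannerGraph J M L π).Walk v u2, k < p.length := by
      intro p
      by_contra hcon
      push_neg at hcon
      exact hu2BU (Finset.mem_union_right _ (mem_RB_of_walk' _ p hcon))
    have hBvv2 : ∀ p : (tannerGraph J M L π).Walk v v2, k < p.length := by
      intro p
      by_contra hcon
      push_neg at hcon
      exact hv2BU (Finset.mem_union_right _ (mem_RB_of_walk' _ p hcon))
    have hsurg : ∀ {z : VT J M L} (c : (tannerGraph J M L π').Walk z z), c.IsCycle →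
        c.length ≤ k → s(u,v2) ∉ c.edges ∧ s(u2,v) ∉ c.edges := by
      intro z c hc hck
      exact surgery h1 hadj_uv hadj_u2v2 h4 h5 hgirth hne_uu2 hne_uv2 hne_u2v
        hBuu2 hBuv2 hBvu2 hBvv2 (by omega) c hc hck
    -- the swapped graph still has girth ≥ k
    have hπ'girth : (k:ℕ∞) ≤ (tannerGraph J M L π').egirth := by
      rw [le_egirth]
      intro a c hc
      rcases Nat.lt_or_ge k c.length with h | h
      · exact_mod_cast h.le
      · obtain ⟨hs1, hs2⟩ := hsurg c hc h
        have hle := le_egirth.mp hgirth a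
          (c.transfer (tannerGraph J M L π) (transfer_avoid h1 c hs1 hs2)) (hc.transfer _)
        rw [length_transfer] at hle
        exact hle
    have hπ'S : π' ∈ S := by
      rw [hSdef, Finset.mem_filter]
      exact ⟨Finset.mem_univ _, hπ'girth⟩
    -- strictly fewer k-cycles
    have hwmem : w.support ∈ cycSupports (tannerGraph J M L π) k :=
      mem_cycSupports.2 ⟨z, w, hwcyc, hwlen, rfl⟩
    have hsubset : cycSupports (tannerGraph J M L π') k ⊆
        (cycSupports (tannerGraph J M L π) k).erase w.support := by
      intro l' hl'
      obtain ⟨z', c, hcyc, hlen, hsup⟩ := mem_cycSupports.1 hl'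
      obtain ⟨hs1, hs2⟩ := hsurg c hcyc (le_of_eq hlen)
      refine Finset.mem_erase.2 ⟨?_, ?_⟩
      · intro heq
        have hedges : c.edges = w.edges :=
          edges_eq_of_support_eq c w (by rw [hsup, heq])
        have : s(u,v) ∈ c.edges := by rw [hedges]; exact hedge
        have : (tannerGraph J M L π').Adj u v := c.edges_subset_edgeSet this
        exact h4 this
      · refine mem_cycSupports.2 ⟨z',
          c.transfer (tannerGraph J M L π) (transfer_avoid h1 c hs1 hs2),
          hcyc.transfer _, ?_, ?_⟩
        · rw [length_transfer]; exact hlen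
        · rw [support_transfer]; exact hsup
    have hlt : (cycSupports (tannerGraph J M L π') k).card <
        (cycSupports (tannerGraph J M L π) k).card := by
      have h1' := Finset.card_le_card hsubset
      rw [Finset.card_erase_of_mem hwmem] at h1'
      have hpos : 0 < (cycSupports (tannerGraph J M L π) k).card :=
        Finset.card_pos.2 ⟨_, hwmem⟩
      omega
    have := hmin π' hπ'S
    omega

end Tanner
end StepPart3
section FinalPart
open SimpleGraph Walk
namespace Tanner

variable {J L M : ℕ}

lemma girth_exists (hJ : 3 ≤ J) (K : ℕ) (hK : 3 ≤ K)
    (hM : 16*(2*J+2)*((2*J-1)*(J-1))^(K/2) + 1 ≤ M) :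
    ∃ π : Fin J → Fin 2 → Fin (L+J) → Equiv.Perm (Fin M),
      (K : ℕ∞) ≤ (tannerGraph J M L π).egirth := by
  have hD1 : 1 ≤ (2*J-1)*(J-1) := by
    calc 1 ≤ 5 * 2 := by norm_num
      _ ≤ _ := Nat.mul_le_mul (by omega) (by omega)
  have H : ∀ n, 3 ≤ n → n ≤ K →
      ∃ π : Fin J → Fin 2 → Fin (L+J) → Equiv.Perm (Fin M),
        (n : ℕ∞) ≤ (tannerGraph J M L π).egirth := by
    intro n
    induction n with
    | zero => omega
    | succ n ih =>
      intro h3 hK'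
      rcases Nat.lt_or_ge n 3 with h | h
      · have hn3 : n + 1 = 3 := by omega
        rw [hn3]
        exact ⟨fun _ _ _ => 1, three_le_egirth⟩
      · have hstep : 16*(2*J+2)*((2*J-1)*(J-1))^((n+1)/2) + 1 ≤ M := by
          have hle : (n+1)/2 ≤ K/2 := by omega
          have hpow := Nat.pow_le_pow_right hD1 hle
          have := Nat.mul_le_mul_left (16*(2*J+2)) hpow
          omega
        exact step_lemma hJ h hstep (ih h (by omega))
  exact H K hK le_rfl

theorem final (hJ : 3 ≤ J) (hL : 1 ≤ L) :
    ∃ c₁ : ℝ, ∀ M : ℕ, 1 ≤ M →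
      ∃ π : Fin J → Fin 2 → Fin (L + J) → Equiv.Perm (Fin M),
        (∀ g : ℕ, (tannerGraph J M L π).egirth = (g : ℕ∞) →
          (g : ℝ) / 4 >
            Real.log M / (2 * Real.log ((2 * (J : ℝ) - 1) * ((J : ℝ) - 1))) - c₁) ∧
        ∃ l₀ : ℕ,
          ((4 * l₀ + 2 : ℕ) : ℕ∞) ≤ (tannerGraph J M L π).egirth ∧
          (l₀ : ℝ) >
            Real.log M / (2 * Real.log ((2 * (J : ℝ) - 1) * ((J : ℝ) - 1))) - c₁ := by
  classical
  set Dn : ℕ := (2*J-1)*(J-1) with hDn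
  set cn : ℕ := 16*(2*J+2) with hcn
  have hD10 : 10 ≤ Dn := by
    rw [hDn]
    calc 10 = 5 * 2 := by norm_num
      _ ≤ _ := Nat.mul_le_mul (by omega) (by omega)
  have hcn1 : 1 ≤ cn := by rw [hcn]; omega
  have hDcast : (2 * (J : ℝ) - 1) * ((J : ℝ) - 1) = (Dn : ℝ) := by
    rw [hDn]
    rw [Nat.cast_mul, Nat.cast_sub (by omega : 1 ≤ 2*J), Nat.cast_sub (by omega : 1 ≤ J)]
    push_cast
    ring
  set LD : ℝ := Real.log Dn with hLD
  have hLDpos : 0 < LD := by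
    rw [hLD]
    apply Real.log_pos
    exact_mod_cast (by omega : 1 < Dn)
  set Kn : ℕ := cn * Dn^2 with hKn
  have hKn1 : 1 ≤ Kn := by
    rw [hKn]
    exact Nat.one_le_iff_ne_zero.2 (by positivity)
  have hcnKn : (cn:ℝ) ≤ (Kn:ℝ) := by
    have : cn ≤ Kn := by
      rw [hKn]
      have : 1 ≤ Dn^2 := Nat.one_le_iff_ne_zero.2 (by positivity)
      exact Nat.le_mul_of_pos_right cn (by omega)
    exact_mod_cast this
  have hcnpos : (0:ℝ) < cn := by exact_mod_cast (by omega : 0 < cn)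
  have hlogcK : Real.log cn ≤ Real.log Kn := Real.log_le_log hcnpos hcnKn
  refine ⟨Real.log Kn / (2 * LD) + 4, ?_⟩
  intro M hM1
  have hMpos : (0:ℝ) < M := by exact_mod_cast hM1
  by_cases hbig : Kn + 1 ≤ M
  · -- big case
    have hP2 : cn * Dn^2 + 1 ≤ M := by rw [← hKn]; exact hbig
    set P : ℕ → Prop := fun r => cn * Dn ^ r + 1 ≤ M with hPdef
    have hP2' : P 2 := hP2
    set r : ℕ := Nat.findGreatest P M with hr
    have h2M : 2 ≤ M := by omega
    have hr2 : 2 ≤ r := Nat.le_findGreatest h2M hP2'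
    have hrle : r ≤ M := Nat.findGreatest_le M
    have hrP' : P r := Nat.findGreatest_spec (m := 2) (P := P) h2M hP2'
    have hrP : cn * Dn^r + 1 ≤ M := hrP'
    have hrM : r < M := by
      rcases Nat.lt_or_ge r M with h | h
      · exact h
      · exfalso
        have hrM' : r = M := le_antisymm hrle h
        rw [hrM'] at hrP
        have hbad : cn * Dn^M + 1 ≤ M := hrP
        have h2m : M < 2^M := Nat.lt_two_pow_self
        have hpm : 2^M ≤ Dn^M := Nat.pow_le_pow_left (by omega) M
        have : Dn^M ≤ cn * Dn^M := Nat.le_mul_of_pos_left _ (by omega)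
        omega
    have hnP' : ¬ P (r+1) :=
      Nat.findGreatest_is_greatest (by omega : Nat.findGreatest P M < r + 1) (by omega)
    have hnP : ¬ (cn * Dn^(r+1) + 1 ≤ M) := hnP'
    have hMub : M ≤ cn * Dn^(r+1) := by omega
    obtain ⟨π, hπ⟩ := girth_exists (M := M) (L := L) hJ (2*r) (by omega)
      (by
        have h22 : 2*r/2 = r := by omega
        rw [h22]
        exact hrP)
    have hMr : (M:ℝ) ≤ (cn:ℝ) * (Dn:ℝ)^(r+1) := by exact_mod_cast hMub
    have hlogM : Real.log M ≤ Real.log cn + ((r:ℝ)+1) * LD := by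
      calc Real.log M ≤ Real.log ((cn:ℝ) * (Dn:ℝ)^(r+1)) := Real.log_le_log hMpos hMr
        _ = Real.log cn + Real.log ((Dn:ℝ)^(r+1)) := by
            rw [Real.log_mul (ne_of_gt hcnpos) (by positivity)]
        _ = Real.log cn + ((r:ℝ)+1) * LD := by
            rw [Real.log_pow, hLD]
            push_cast
            ring
    have hsplit : (Real.log cn + ((r:ℝ)+1) * LD) / (2*LD)
        = Real.log cn/(2*LD) + ((r:ℝ)+1)/2 := by
      field_simp
    have hkey : Real.log M / (2 * LD) ≤ Real.log Kn / (2 * LD) + ((r:ℝ)+1)/2 := by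
      have h1 : Real.log M / (2*LD) ≤ (Real.log cn + ((r:ℝ)+1) * LD) / (2*LD) := by
        gcongr
      have h2 : Real.log cn/(2*LD) ≤ Real.log Kn/(2*LD) := by gcongr
      rw [hsplit] at h1
      linarith
    refine ⟨π, ?_, ?_⟩
    · intro g hg
      rw [hg] at hπ
      have hgr : 2*r ≤ g := by exact_mod_cast hπ
      have hgr' : 2*(r:ℝ) ≤ (g:ℝ) := by exact_mod_cast hgr
      rw [hDcast, ← hLD]
      linarith
    · refine ⟨(2*r-2)/4, ?_, ?_⟩
      · have hl0a : 4*((2*r-2)/4) + 2 ≤ 2*r := by omega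
        refine le_trans ?_ hπ
        exact_mod_cast Nat.cast_le.2 hl0a
      · have hl0b : 2*r ≤ 4*((2*r-2)/4) + 5 := by omega
        have hl0b' : 2*(r:ℝ) ≤ 4*(((2*r-2)/4 : ℕ):ℝ) + 5 := by exact_mod_cast hl0b
        rw [hDcast, ← hLD]
        linarith
  · -- small case
    have hMK : M ≤ Kn := by omega
    have hlogMK : Real.log M ≤ Real.log Kn := Real.log_le_log hMpos (by exact_mod_cast hMK)
    have hRHS : Real.log M / (2*LD) - (Real.log Kn / (2 * LD) + 4) < 0 := by
      have : Real.log M/(2*LD) ≤ Real.log Kn/(2*LD) := by gcongr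
      linarith
    refine ⟨fun _ _ _ => 1, ?_, 0, ?_, ?_⟩
    · intro g hg
      rw [hDcast, ← hLD]
      have : (0:ℝ) ≤ (g:ℝ)/4 := by positivity
      linarith
    · refine le_trans ?_ (three_le_egirth (G := tannerGraph J M L (fun _ _ _ => 1)))
      norm_num
    · rw [hDcast, ← hLD]
      norm_num
      linarith

end Tanner
end FinalPart

/-- For every `J ≥ 3` and termination length `L ≥ 1` there is a constant `c₁`
(independent of `M`) such that for every `M ≥ 1` some choice of permutations
yields a terminated Tanner graph whose girth `g` satisfies
`g / 4 > log M / (2 log((2J-1)(J-1))) - c₁`; equivalently, there is a code in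
`C_P(J, 2J, M)` whose number `l₀` of independent (cycle-free) decoding
iterations (guaranteed whenever the girth is at least `4 l₀ + 2`) satisfies
`l₀ > log M / (2 log((2J-1)(J-1))) - c₁`. -/
theorem stmt0 (J L : ℕ) (hJ : 3 ≤ J) (hL : 1 ≤ L) :
    ∃ c₁ : ℝ, ∀ M : ℕ, 1 ≤ M →
      ∃ π : Fin J → Fin 2 → Fin (L + J) → Equiv.Perm (Fin M),
        (∀ g : ℕ, (tannerGraph J M L π).egirth = (g : ℕ∞) →
          (g : ℝ) / 4 >
            Real.log M / (2 * Real.log ((2 * (J : ℝ) - 1) * ((J : ℝ) - 1))) - c₁) ∧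
        ∃ l₀ : ℕ,
          ((4 * l₀ + 2 : ℕ) : ℕ∞) ≤ (tannerGraph J M L π).egirth ∧
          (l₀ : ℝ) >
            Real.log M / (2 * Real.log ((2 * (J : ℝ) - 1) * ((J : ℝ) - 1))) - c₁ := by
  exact Tanner.final hJ hL
end

section
/- Let J ≥ 3 be an integer, let A be a real number with 0 < A ≤ 1, let ℓ' be a natural number, and let b : ℕ → ℝ be a sequence with b(ℓ) ≥ 0 for all ℓ and b(ℓ+1) ≤ A·((2J−1)·b(ℓ))^{J−1} for all ℓ ≥ ℓ'. Define the breakout value B_br = A^{−1/(J−1)} · (2J−1)^{−(J−1)/(J−2)}. If b(ℓ') < B_br, then for every ℓ₀ ≥ ℓ' one has b(ℓ₀) ≤ B_br · ( b(ℓ') / B_br )^{(J−1)^{ℓ₀−ℓ'}}; in particular the sequence converges to zero at least double exponentially in the number of iterations. -/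
/-- Double-exponential convergence below the breakout value: if `J ≥ 3`, the channel
Bhattacharyya parameter satisfies `0 < A ≤ 1`, the nonnegative sequence `b` satisfies
the density-evolution recursion bound `b (ℓ+1) ≤ A ((2J-1) b ℓ)^(J-1)` for `ℓ ≥ ℓ'`,
and `b ℓ'` is below the breakout value `B_br = A^(-1/(J-1)) (2J-1)^(-(J-1)/(J-2))`,
then `b ℓ₀ ≤ B_br (b ℓ' / B_br)^((J-1)^(ℓ₀-ℓ'))` for all `ℓ₀ ≥ ℓ'`. -/
theorem stmt2 (J : ℕ) (hJ : 3 ≤ J) (A : ℝ) (hA0 : 0 < A) (hA1 : A ≤ 1)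
    (ℓ' : ℕ) (b : ℕ → ℝ) (hb : ∀ ℓ, 0 ≤ b ℓ)
    (hrec : ∀ ℓ, ℓ' ≤ ℓ → b (ℓ + 1) ≤ A * ((2 * (J : ℝ) - 1) * b ℓ) ^ (J - 1))
    (Bbr : ℝ)
    (hBbr : Bbr = A ^ (-(1 : ℝ) / ((J : ℝ) - 1)) *
      (2 * (J : ℝ) - 1) ^ (-((J : ℝ) - 1) / ((J : ℝ) - 2)))
    (hinit : b ℓ' < Bbr) :
    ∀ ℓ₀, ℓ' ≤ ℓ₀ → b ℓ₀ ≤ Bbr * (b ℓ' / Bbr) ^ ((J - 1) ^ (ℓ₀ - ℓ')) := by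
  have hJ3 : (3:ℝ) ≤ (J:ℝ) := by exact_mod_cast hJ
  set c : ℝ := 2 * (J:ℝ) - 1 with hcdef
  have hc : (0:ℝ) < c := by simp only [hcdef]; linarith
  have hJ1 : (0:ℝ) < (J:ℝ) - 1 := by linarith
  have hJ2 : (0:ℝ) < (J:ℝ) - 2 := by linarith
  have hn : ((J - 1 : ℕ) : ℝ) = (J:ℝ) - 1 := by
    have : 1 ≤ J := by omega
    push_cast [this]; ring
  have hApow : (0:ℝ) < A ^ (-(1 : ℝ) / ((J : ℝ) - 1)) := Real.rpow_pos_of_pos hA0 _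
  have hcpow : (0:ℝ) < c ^ (-((J : ℝ) - 1) / ((J : ℝ) - 2)) := Real.rpow_pos_of_pos hc _
  have hB : 0 < Bbr := by rw [hBbr]; positivity
  -- key inequality
  have key : A * (c * Bbr) ^ (J - 1) ≤ Bbr := by
    have h1 : (c * Bbr) ^ (J - 1) = c ^ (J-1) * (A ^ (-(1 : ℝ) / ((J : ℝ) - 1))) ^ (J-1)
        * (c ^ (-((J : ℝ) - 1) / ((J : ℝ) - 2))) ^ (J-1) := by
      rw [hBbr, mul_pow, mul_pow]; ring
    have h2 : (A ^ (-(1 : ℝ) / ((J : ℝ) - 1))) ^ (J-1) = A⁻¹ := by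
      rw [← Real.rpow_natCast (A ^ (-(1 : ℝ) / ((J : ℝ) - 1))) (J-1),
        ← Real.rpow_mul hA0.le, hn]
      have : -(1 : ℝ) / ((J : ℝ) - 1) * ((J:ℝ) - 1) = -1 := by
        field_simp
      rw [this, Real.rpow_neg_one]
    have h3 : c ^ (J-1) * (c ^ (-((J : ℝ) - 1) / ((J : ℝ) - 2))) ^ (J-1)
        = c ^ (-((J : ℝ) - 1) / ((J : ℝ) - 2)) := by
      rw [← Real.rpow_natCast (c ^ (-((J : ℝ) - 1) / ((J : ℝ) - 2))) (J-1),
        ← Real.rpow_mul hc.le, ← Real.rpow_natCast c (J-1), ← Real.rpow_add hc, hn]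
      congr 1
      field_simp
      ring
    have h4 : A * (c * Bbr) ^ (J - 1) = c ^ (-((J : ℝ) - 1) / ((J : ℝ) - 2)) := by
      rw [h1, h2]
      calc A * (c ^ (J-1) * A⁻¹ * (c ^ (-((J : ℝ) - 1) / ((J : ℝ) - 2))) ^ (J-1))
          = (A * A⁻¹) * (c ^ (J-1) * (c ^ (-((J : ℝ) - 1) / ((J : ℝ) - 2))) ^ (J-1)) := by
            ring
        _ = c ^ (-((J : ℝ) - 1) / ((J : ℝ) - 2)) := by
            rw [mul_inv_cancel₀ hA0.ne', one_mul, h3]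
    rw [h4, hBbr]
    have h5 : 1 ≤ A ^ (-(1 : ℝ) / ((J : ℝ) - 1)) := by
      apply Real.one_le_rpow_of_pos_of_le_one_of_nonpos hA0 hA1
      apply div_nonpos_of_nonpos_of_nonneg <;> linarith
    nlinarith
  -- induction
  have hr0 : 0 ≤ b ℓ' / Bbr := div_nonneg (hb _) hB.le
  have main : ∀ k, b (ℓ' + k) ≤ Bbr * (b ℓ' / Bbr) ^ ((J - 1) ^ k) := by
    intro k
    induction k with
    | zero =>
      simp only [pow_zero, pow_one, Nat.add_zero]
      rw [mul_comm, div_mul_cancel₀ _ hB.ne']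
    | succ k ih =>
      have hbk : 0 ≤ b (ℓ' + k) := hb _
      have step1 : b (ℓ' + (k+1)) ≤ A * (c * b (ℓ' + k)) ^ (J - 1) := by
        exact hrec (ℓ' + k) (Nat.le_add_right _ _)
      have step2 : (c * b (ℓ' + k)) ^ (J - 1)
          ≤ (c * (Bbr * (b ℓ' / Bbr) ^ ((J - 1) ^ k))) ^ (J - 1) := by
        apply pow_le_pow_left₀ (by positivity)
        exact mul_le_mul_of_nonneg_left ih hc.le
      have step3 : A * (c * (Bbr * (b ℓ' / Bbr) ^ ((J - 1) ^ k))) ^ (J - 1)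
          ≤ Bbr * (b ℓ' / Bbr) ^ ((J - 1) ^ (k+1)) := by
        have e1 : (c * (Bbr * (b ℓ' / Bbr) ^ ((J - 1) ^ k))) ^ (J - 1)
            = (c * Bbr) ^ (J-1) * ((b ℓ' / Bbr) ^ ((J - 1) ^ k)) ^ (J-1) := by
          rw [← mul_pow]; ring_nf
        rw [e1, ← mul_assoc, ← pow_mul, ← pow_succ]
        exact mul_le_mul_of_nonneg_right key (by positivity)
      calc b (ℓ' + (k+1)) ≤ A * (c * b (ℓ' + k)) ^ (J - 1) := step1
        _ ≤ A * (c * (Bbr * (b ℓ' / Bbr) ^ ((J - 1) ^ k))) ^ (J - 1) :=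
            mul_le_mul_of_nonneg_left step2 hA0.le
        _ ≤ Bbr * (b ℓ' / Bbr) ^ ((J - 1) ^ (k+1)) := step3
  intro ℓ₀ hle
  have := main (ℓ₀ - ℓ')
  rwa [Nat.add_sub_cancel' hle] at this
end

section
/- Let J ≥ 3 be an integer, let A be a real number with 0 < A ≤ 1, let ℓ' be a natural number, and let b : ℕ → ℝ be a sequence with b(ℓ) ≥ 0 for all ℓ and b(ℓ+1) ≤ A·((2J−1)·b(ℓ))^{J−1} for all ℓ ≥ ℓ'. If b(ℓ') < B_br, where B_br = A^{−1/(J−1)} · (2J−1)^{−(J−1)/(J−2)}, then b(ℓ) tends to 0 as ℓ → ∞. -/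
/-- Convergence to zero below the breakout value: if `J ≥ 3`, the channel Bhattacharyya
parameter satisfies `0 < A ≤ 1`, the nonnegative sequence `b` satisfies the
density-evolution recursion bound `b (ℓ+1) ≤ A ((2J-1) b ℓ)^(J-1)` for `ℓ ≥ ℓ'`, and
`b ℓ'` is below the breakout value `B_br = A^(-1/(J-1)) (2J-1)^(-(J-1)/(J-2))`, then
`b ℓ → 0` as `ℓ → ∞`. -/
theorem stmt3 (J : ℕ) (hJ : 3 ≤ J) (A : ℝ) (hA0 : 0 < A) (hA1 : A ≤ 1)
    (ℓ' : ℕ) (b : ℕ → ℝ) (hb : ∀ ℓ, 0 ≤ b ℓ)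
    (hrec : ∀ ℓ, ℓ' ≤ ℓ → b (ℓ + 1) ≤ A * ((2 * (J : ℝ) - 1) * b ℓ) ^ (J - 1))
    (Bbr : ℝ)
    (hBbr : Bbr = A ^ (-(1 : ℝ) / ((J : ℝ) - 1)) *
      (2 * (J : ℝ) - 1) ^ (-((J : ℝ) - 1) / ((J : ℝ) - 2)))
    (hinit : b ℓ' < Bbr) :
    Filter.Tendsto b Filter.atTop (nhds 0) := by
  set c : ℝ := 2 * (J : ℝ) - 1 with hc_def
  have hJ3 : (3 : ℝ) ≤ (J : ℝ) := by exact_mod_cast hJ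
  have hc : 0 < c := by rw [hc_def]; linarith
  have hJ1 : (0 : ℝ) < (J : ℝ) - 1 := by linarith
  have hJ2 : (0 : ℝ) < (J : ℝ) - 2 := by linarith
  have hcast1 : ((J - 1 : ℕ) : ℝ) = (J : ℝ) - 1 := by
    have : 1 ≤ J := by omega
    push_cast [this]; ring
  have hcast2 : ((J - 2 : ℕ) : ℝ) = (J : ℝ) - 2 := by
    have : 2 ≤ J := by omega
    push_cast [this]; ring
  have hA' : (0 : ℝ) ≤ A := hA0.le
  have hBbr0 : 0 < Bbr := by
    rw [hBbr]
    positivity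
  -- key inequality
  have hbb : Bbr ^ (J - 2) = A ^ (-((J : ℝ) - 2) / ((J : ℝ) - 1)) * c ^ (-((J : ℝ) - 1)) := by
    rw [hBbr, ← Real.rpow_natCast _ (J - 2), hcast2,
      Real.mul_rpow (by positivity) (by positivity),
      ← Real.rpow_mul hA', ← Real.rpow_mul hc.le]
    congr 1
    · congr 1; field_simp
    · congr 1; field_simp
  have hkey : A * c ^ (J - 1) * Bbr ^ (J - 2) ≤ 1 := by
    have hcpow : c ^ (J - 1) = c ^ ((J : ℝ) - 1) := by
      rw [← Real.rpow_natCast _ (J - 1), hcast1]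
    rw [hbb, hcpow]
    have : A * c ^ ((J : ℝ) - 1) * (A ^ (-((J : ℝ) - 2) / ((J : ℝ) - 1)) * c ^ (-((J : ℝ) - 1)))
        = A ^ (1 + -((J : ℝ) - 2) / ((J : ℝ) - 1)) * c ^ (((J : ℝ) - 1) + -((J : ℝ) - 1)) := by
      rw [Real.rpow_add hA0, Real.rpow_add hc, Real.rpow_one]
      ring
    rw [this]
    have h2 : ((J : ℝ) - 1) + -((J : ℝ) - 1) = 0 := by ring
    rw [h2, Real.rpow_zero, mul_one]
    apply Real.rpow_le_one hA' hA1
    have h3 : 1 + -((J : ℝ) - 2) / ((J : ℝ) - 1) = 1 / ((J : ℝ) - 1) := by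
      field_simp
      ring
    rw [h3]
    positivity
  set r : ℝ := A * c ^ (J - 1) * (b ℓ') ^ (J - 2) with hr_def
  have hJ2n : J - 2 ≠ 0 := by omega
  have hr0 : 0 ≤ r :=
    mul_nonneg (mul_nonneg hA' (pow_nonneg hc.le _)) (pow_nonneg (hb ℓ') _)
  have hr1 : r < 1 := by
    rcases eq_or_lt_of_le (hb ℓ') with h0 | h0
    · rw [hr_def, ← h0, zero_pow hJ2n, mul_zero]; norm_num
    · have hlt : (b ℓ') ^ (J - 2) < Bbr ^ (J - 2) :=
        pow_lt_pow_left₀ hinit (hb ℓ') hJ2n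
      have hAc : 0 < A * c ^ (J - 1) := mul_pos hA0 (pow_pos hc _)
      calc r < A * c ^ (J - 1) * Bbr ^ (J - 2) := by
              exact mul_lt_mul_of_pos_left hlt hAc
        _ ≤ 1 := hkey
  have hmain : ∀ k, b (ℓ' + k) ≤ b ℓ' * r ^ k := by
    intro k
    induction k with
    | zero => simp
    | succ k ih =>
      have h1 := hrec (ℓ' + k) (Nat.le_add_right _ _)
      have hbk := hb (ℓ' + k)
      have hrk1 : r ^ k ≤ 1 := pow_le_one₀ hr0 hr1.le
      have hble : b (ℓ' + k) ≤ b ℓ' := by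
        calc b (ℓ' + k) ≤ b ℓ' * r ^ k := ih
          _ ≤ b ℓ' * 1 := mul_le_mul_of_nonneg_left hrk1 (hb ℓ')
          _ = b ℓ' := mul_one _
      have hexp : J - 1 = (J - 2) + 1 := by omega
      have h2 : A * (c * b (ℓ' + k)) ^ (J - 1)
          = (A * c ^ (J - 1) * (b (ℓ' + k)) ^ (J - 2)) * b (ℓ' + k) := by
        rw [mul_pow]
        rw [hexp, pow_succ, pow_succ]
        ring
      have h3 : A * c ^ (J - 1) * (b (ℓ' + k)) ^ (J - 2) ≤ r := by
        rw [hr_def]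
        have : (b (ℓ' + k)) ^ (J - 2) ≤ (b ℓ') ^ (J - 2) :=
          pow_le_pow_left₀ hbk hble _
        have hAc : (0:ℝ) ≤ A * c ^ (J - 1) := le_of_lt (mul_pos hA0 (pow_pos hc _))
        exact mul_le_mul_of_nonneg_left this hAc
      calc b (ℓ' + (k + 1)) = b ((ℓ' + k) + 1) := by ring_nf
        _ ≤ A * (c * b (ℓ' + k)) ^ (J - 1) := h1
        _ = (A * c ^ (J - 1) * (b (ℓ' + k)) ^ (J - 2)) * b (ℓ' + k) := h2
        _ ≤ r * (b ℓ' * r ^ k) := by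
            apply mul_le_mul h3 ih hbk hr0
        _ = b ℓ' * r ^ (k + 1) := by ring
  have htend : Filter.Tendsto (fun k => b ℓ' * r ^ k) Filter.atTop (nhds 0) := by
    have := (tendsto_pow_atTop_nhds_zero_of_lt_one hr0 hr1).const_mul (b ℓ')
    simpa using this
  have hsq : Filter.Tendsto (fun k => b (k + ℓ')) Filter.atTop (nhds 0) := by
    apply squeeze_zero (fun k => hb _) (fun k => ?_) htend
    rw [add_comm]
    exact hmain k
  exact (Filter.tendsto_add_atTop_iff_nat ℓ').mp hsq
end

section
/- Let n ≥ 1 and let p₁,…,pₙ ∈ (0,1). Set zᵢ = log((1−pᵢ)/pᵢ) and r = (1 − ∏_{i=1}^{n}(1 − 2·pᵢ))/2. Then r ∈ (0,1) and 2·arctanh( ∏_{i=1}^{n} tanh(zᵢ/2) ) = log((1−r)/r). In other words, the check node update rule β = 2·arctanh(∏ tanh(zᵢ/2)) produces exactly the log-likelihood ratio of the modulo-2 sum of n independent bits whose individual probabilities of equaling 1 are p₁,…,pₙ. -/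
/-- The inverse hyperbolic tangent, `arctanh x = (1/2) log((1+x)/(1-x))`. -/
noncomputable def arctanh (x : ℝ) : ℝ := Real.log ((1 + x) / (1 - x)) / 2

lemma tanh_half_log {t : ℝ} (ht : 0 < t) :
    Real.tanh (Real.log t / 2) = (t - 1) / (t + 1) := by
  have h1 : Real.exp (Real.log t / 2) * Real.exp (Real.log t / 2) = t := by
    rw [← Real.exp_add]
    have : Real.log t / 2 + Real.log t / 2 = Real.log t := by ring
    rw [this, Real.exp_log ht]
  have hpos : 0 < Real.exp (Real.log t / 2) := Real.exp_pos _
  rw [Real.tanh_eq_sinh_div_cosh, Real.sinh_eq, Real.cosh_eq, Real.exp_neg]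
  have ht1 : (0:ℝ) < t + 1 := by linarith
  field_simp
  linear_combination (2 : ℝ) * h1

/-- The belief-propagation check node update rule `β = 2 arctanh(∏ tanh(zᵢ/2))`
produces exactly the log-likelihood ratio of the modulo-2 sum of `n` independent bits
with parameters `p₁, …, pₙ ∈ (0,1)`: with `zᵢ = log((1-pᵢ)/pᵢ)` and
`r = (1 - ∏ (1 - 2 pᵢ))/2`, we have `r ∈ (0,1)` and
`2 arctanh(∏ tanh(zᵢ/2)) = log((1-r)/r)`. -/
theorem stmt9 (n : ℕ) (hn : 1 ≤ n) (p : Fin n → ℝ) (hp : ∀ i, p i ∈ Set.Ioo (0 : ℝ) 1)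
    (z : Fin n → ℝ) (hz : ∀ i, z i = Real.log ((1 - p i) / p i))
    (r : ℝ) (hr : r = (1 - ∏ i, (1 - 2 * p i)) / 2) :
    r ∈ Set.Ioo (0 : ℝ) 1 ∧
      2 * arctanh (∏ i, Real.tanh (z i / 2)) = Real.log ((1 - r) / r) := by
  have htanh : ∀ i, Real.tanh (z i / 2) = 1 - 2 * p i := by
    intro i
    have hpi := hp i
    have h0 : 0 < p i := hpi.1
    have h1 : p i < 1 := hpi.2
    have ht : 0 < (1 - p i) / p i := div_pos (by linarith) h0
    rw [hz i, tanh_half_log ht]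
    field_simp
    ring
  have hprod : (∏ i, Real.tanh (z i / 2)) = ∏ i, (1 - 2 * p i) := by
    exact Finset.prod_congr rfl (fun i _ => htanh i)
  have habs : |∏ i, (1 - 2 * p i)| < 1 := by
    calc |∏ i, (1 - 2 * p i)| = ∏ i, |1 - 2 * p i| := Finset.abs_prod _ _
    _ < 1 := by
        have hlt : ∀ i, |1 - 2 * p i| < 1 := by
          intro i
          have hpi := hp i
          rw [abs_lt]; constructor <;> [linarith [hpi.2]; linarith [hpi.1]]
        have i0 : Fin n := ⟨0, hn⟩
        rw [← Finset.mul_prod_erase Finset.univ _ (Finset.mem_univ i0)]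
        have hrest : (∏ i ∈ Finset.univ.erase i0, |1 - 2 * p i|) ≤ 1 :=
          Finset.prod_le_one (fun i _ => abs_nonneg _) (fun i _ => (hlt i).le)
        calc |1 - 2 * p i0| * ∏ i ∈ Finset.univ.erase i0, |1 - 2 * p i|
            ≤ |1 - 2 * p i0| * 1 := by
              exact mul_le_mul_of_nonneg_left hrest (abs_nonneg _)
          _ < 1 := by rw [mul_one]; exact hlt i0
  rw [abs_lt] at habs
  have hr0 : 0 < r := by rw [hr]; linarith [habs.2]
  have hr1 : r < 1 := by rw [hr]; linarith [habs.1]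
  refine ⟨⟨hr0, hr1⟩, ?_⟩
  rw [hprod, arctanh]
  have hP : (∏ i, (1 - 2 * p i)) = 1 - 2 * r := by rw [hr]; ring
  rw [hP]
  have : (1 + (1 - 2 * r)) / (1 - (1 - 2 * r)) = (1 - r) / r := by
    field_simp; ring
  rw [this]
  ring
end

section
/- Let J ≥ 3 be an integer and let A be a real number with 0 < A ≤ 1. For each ℓ ∈ ℕ let B^{(ℓ)} : ℤ × {0,…,J−1} → ℝ satisfy 0 ≤ B^{(ℓ)}(t,k) ≤ 1 for all t,k, and suppose that for every ℓ ≥ 1, every t ∈ ℤ, and every k ∈ {0,…,J−1}, B^{(ℓ)}(t,k) ≤ A · ∏_{k' ∈ {0,…,J−1}, k' ≠ k} ( B^{(ℓ−1)}(t,k') + Σ_{i' ∈ {0,…,J−1}, i' ≠ k'} B^{(ℓ−1)}(t+k'−i', i')² ). Define B_max^{(ℓ)} = sup_{t,k} B^{(ℓ)}(t,k) and the breakout value B_br = A^{−1/(J−1)} · (2J−1)^{−(J−1)/(J−2)}. If B_max^{(ℓ')} < B_br for some iteration ℓ', then for every ℓ₀ ≥ ℓ' and all t ∈ ℤ, k ∈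 {0,…,J−1}, B^{(ℓ₀)}(t,k) ≤ B_max^{(ℓ₀)} ≤ B_br · ( B_max^{(ℓ')} / B_br )^{(J−1)^{ℓ₀−ℓ'}}, so the Bhattacharyya parameters of all messages—and hence the bit error probabilities of all code symbols—converge to zero at least double exponentially with the number of decoding iterations. -/
/-- Double-exponential convergence of density evolution for terminated `(J, 2J)`-regular
LDPC convolutional codes: let `B ℓ t k ∈ [0,1]` be the Bhattacharyya parameter of the
message sent in iteration `ℓ` from a symbol node at time `t` to a check node at time
`t + k`, satisfying the density-evolution bound
`B ℓ t k ≤ A ∏_{k' ≠ k} (B (ℓ-1) t k' + ∑_{i' ≠ k'} B (ℓ-1) (t+k'-i') i' ^ 2)` for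
`ℓ ≥ 1`, where `0 < A ≤ 1` is the channel Bhattacharyya parameter. Let
`Bmax ℓ = sup_{t,k} B ℓ t k` and let
`B_br = A^(-1/(J-1)) (2J-1)^(-(J-1)/(J-2))` be the breakout value. If `Bmax ℓ' < B_br`
for some iteration `ℓ'`, then for all `ℓ₀ ≥ ℓ'` and all `t, k`,
`B ℓ₀ t k ≤ Bmax ℓ₀ ≤ B_br (Bmax ℓ' / B_br)^((J-1)^(ℓ₀-ℓ'))`. -/
theorem stmt11 (J : ℕ) (hJ : 3 ≤ J) (A : ℝ) (hA0 : 0 < A) (hA1 : A ≤ 1)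
    (B : ℕ → ℤ → Fin J → ℝ)
    (hB0 : ∀ (ℓ : ℕ) (t : ℤ) (k : Fin J), 0 ≤ B ℓ t k)
    (hB1 : ∀ (ℓ : ℕ) (t : ℤ) (k : Fin J), B ℓ t k ≤ 1)
    (hupd : ∀ (ℓ : ℕ), 1 ≤ ℓ → ∀ (t : ℤ) (k : Fin J),
      B ℓ t k ≤ A * ∏ k' ∈ Finset.univ.erase k,
        (B (ℓ - 1) t k' + ∑ i' ∈ Finset.univ.erase k',
          (B (ℓ - 1) (t + ((k' : ℕ) : ℤ) - ((i' : ℕ) : ℤ)) i') ^ 2))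
    (Bmax : ℕ → ℝ)
    (hBmax : ∀ ℓ, Bmax ℓ = ⨆ (t : ℤ) (k : Fin J), B ℓ t k)
    (Bbr : ℝ)
    (hBbr : Bbr = A ^ (-(1 : ℝ) / ((J : ℝ) - 1)) *
      (2 * (J : ℝ) - 1) ^ (-((J : ℝ) - 1) / ((J : ℝ) - 2)))
    (ℓ' : ℕ) (hinit : Bmax ℓ' < Bbr) :
    ∀ ℓ₀, ℓ' ≤ ℓ₀ → ∀ (t : ℤ) (k : Fin J),
      B ℓ₀ t k ≤ Bmax ℓ₀ ∧
      Bmax ℓ₀ ≤ Bbr * (Bmax ℓ' / Bbr) ^ ((J - 1) ^ (ℓ₀ - ℓ')) := by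
  -- Basic numeric facts
  have hJR : (3:ℝ) ≤ (J:ℝ) := by exact_mod_cast hJ
  have hCpos : (0:ℝ) < 2 * (J:ℝ) - 1 := by linarith
  have hC1 : (1:ℝ) ≤ 2 * (J:ℝ) - 1 := by linarith
  have hJ1 : 1 ≤ J := by omega
  have hcastJ1 : ((J - 1 : ℕ) : ℝ) = (J:ℝ) - 1 := by
    rw [Nat.cast_sub hJ1]; norm_num
  have hBbrpos : 0 < Bbr := by
    rw [hBbr]
    exact mul_pos (Real.rpow_pos_of_pos hA0 _) (Real.rpow_pos_of_pos hCpos _)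
  have hFin : Nonempty (Fin J) := ⟨⟨0, by omega⟩⟩
  -- Bmax bounds
  have hle_max : ∀ ℓ t k, B ℓ t k ≤ Bmax ℓ := by
    intro ℓ t k
    rw [hBmax]
    have h1 : B ℓ t k ≤ ⨆ k, B ℓ t k :=
      le_ciSup (Set.Finite.bddAbove (Set.finite_range _)) k
    refine h1.trans ?_
    refine le_ciSup (f := fun t => ⨆ k, B ℓ t k) ⟨1, ?_⟩ t
    rintro y ⟨t', rfl⟩
    exact ciSup_le fun k => hB1 ℓ t' k
  have hmax0 : ∀ ℓ, 0 ≤ Bmax ℓ := fun ℓ =>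
    (hB0 ℓ 0 (Classical.arbitrary _)).trans (hle_max ℓ 0 _)
  have hmax1 : ∀ ℓ, Bmax ℓ ≤ 1 := by
    intro ℓ
    rw [hBmax]
    exact ciSup_le fun t => ciSup_le fun k => hB1 ℓ t k
  -- key algebraic inequality
  have key : A * (2 * (J:ℝ) - 1) ^ (J - 1) * Bbr ^ (J - 1) ≤ Bbr := by
    have hJ2ne : (J:ℝ) - 2 ≠ 0 := by linarith
    have hJ1ne : (J:ℝ) - 1 ≠ 0 := by linarith
    rw [hBbr]
    rw [mul_pow, ← Real.rpow_natCast (A ^ (-(1:ℝ) / ((J:ℝ) - 1))) (J - 1),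
      ← Real.rpow_natCast ((2*(J:ℝ)-1) ^ (-((J:ℝ)-1)/((J:ℝ)-2))) (J - 1),
      ← Real.rpow_mul hA0.le, ← Real.rpow_mul hCpos.le, hcastJ1]
    have eA : -(1:ℝ) / ((J:ℝ) - 1) * ((J:ℝ) - 1) = -1 := by field_simp
    have eC : -((J:ℝ) - 1) / ((J:ℝ) - 2) * ((J:ℝ) - 1) =
        -((J:ℝ) - 1) / ((J:ℝ) - 2) - ((J:ℝ) - 1) := by field_simp; ring
    rw [eA, eC]
    have hnat : ((2:ℝ) * (J:ℝ) - 1) ^ (J - 1) = (2*(J:ℝ)-1) ^ (((J:ℝ) - 1) : ℝ) := by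
      rw [← Real.rpow_natCast (2*(J:ℝ)-1) (J-1), hcastJ1]
    rw [hnat]
    have h4 : (2*(J:ℝ)-1) ^ (((J:ℝ)-1) : ℝ) *
        (2*(J:ℝ)-1) ^ (-((J:ℝ)-1)/((J:ℝ)-2) - ((J:ℝ)-1)) =
        (2*(J:ℝ)-1) ^ (-((J:ℝ)-1)/((J:ℝ)-2)) := by
      rw [← Real.rpow_add hCpos]; congr 1; ring
    have e1 : A * (2*(J:ℝ)-1) ^ (((J:ℝ)-1) : ℝ) *
        (A ^ (-1:ℝ) * (2*(J:ℝ)-1) ^ (-((J:ℝ)-1)/((J:ℝ)-2) - ((J:ℝ)-1))) =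
        (2*(J:ℝ)-1) ^ (-((J:ℝ)-1)/((J:ℝ)-2)) := by
      rw [Real.rpow_neg_one]
      calc A * (2*(J:ℝ)-1) ^ (((J:ℝ)-1) : ℝ) *
          (A⁻¹ * (2*(J:ℝ)-1) ^ (-((J:ℝ)-1)/((J:ℝ)-2) - ((J:ℝ)-1)))
          = (A * A⁻¹) * ((2*(J:ℝ)-1) ^ (((J:ℝ)-1) : ℝ) *
            (2*(J:ℝ)-1) ^ (-((J:ℝ)-1)/((J:ℝ)-2) - ((J:ℝ)-1))) := by ring
        _ = (2*(J:ℝ)-1) ^ (-((J:ℝ)-1)/((J:ℝ)-2)) := by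
            rw [mul_inv_cancel₀ hA0.ne', h4, one_mul]
    rw [e1]
    have hnonpos : -(1:ℝ)/((J:ℝ)-1) ≤ 0 :=
      div_nonpos_of_nonpos_of_nonneg (by norm_num) (by linarith)
    have hge1 : 1 ≤ A ^ (-(1:ℝ)/((J:ℝ)-1)) :=
      Real.one_le_rpow_of_pos_of_le_one_of_nonpos hA0 hA1 hnonpos
    exact le_mul_of_one_le_left (Real.rpow_pos_of_pos hCpos _).le hge1
  -- one-step bound
  have step : ∀ ℓ t k, B (ℓ + 1) t k ≤ A * ((2 * (J:ℝ) - 1) * Bmax ℓ) ^ (J - 1) := by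
    intro ℓ t k
    have h := hupd (ℓ + 1) (by omega) t k
    simp only [Nat.add_sub_cancel] at h
    refine h.trans ?_
    have hprod : (∏ k' ∈ Finset.univ.erase k,
        (B ℓ t k' + ∑ i' ∈ Finset.univ.erase k',
          (B ℓ (t + ((k' : ℕ) : ℤ) - ((i' : ℕ) : ℤ)) i') ^ 2)) ≤
        ((2 * (J:ℝ) - 1) * Bmax ℓ) ^ (J - 1) := by
      have hcard : (Finset.univ.erase k).card = J - 1 := by
        rw [Finset.card_erase_of_mem (Finset.mem_univ k), Finset.card_univ,
          Fintype.card_fin]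
      calc (∏ k' ∈ Finset.univ.erase k,
            (B ℓ t k' + ∑ i' ∈ Finset.univ.erase k',
              (B ℓ (t + ((k' : ℕ) : ℤ) - ((i' : ℕ) : ℤ)) i') ^ 2))
          ≤ ∏ _k' ∈ Finset.univ.erase k, ((2 * (J:ℝ) - 1) * Bmax ℓ) := by
            refine Finset.prod_le_prod ?_ ?_
            · intro k' _
              have : (0:ℝ) ≤ ∑ i' ∈ Finset.univ.erase k',
                  (B ℓ (t + ((k' : ℕ) : ℤ) - ((i' : ℕ) : ℤ)) i') ^ 2 :=
                Finset.sum_nonneg fun i' _ => sq_nonneg _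
              have := hB0 ℓ t k'
              linarith
            · intro k' _
              have hsum : (∑ i' ∈ Finset.univ.erase k',
                  (B ℓ (t + ((k' : ℕ) : ℤ) - ((i' : ℕ) : ℤ)) i') ^ 2) ≤
                  ∑ _i' ∈ Finset.univ.erase k', (Bmax ℓ) ^ 2 := by
                refine Finset.sum_le_sum fun i' _ => ?_
                exact pow_le_pow_left₀ (hB0 _ _ _) (hle_max _ _ _) 2
              have hcard' : (Finset.univ.erase k').card = J - 1 := by
                rw [Finset.card_erase_of_mem (Finset.mem_univ k'), Finset.card_univ,
                  Fintype.card_fin]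
              rw [Finset.sum_const, hcard', nsmul_eq_mul, hcastJ1] at hsum
              have h1 := hle_max ℓ t k'
              have h2 := hmax0 ℓ
              have h3 := hmax1 ℓ
              have haux1 : Bmax ℓ ^ 2 ≤ Bmax ℓ := by nlinarith
              have haux2 : ((J:ℝ) - 1) * Bmax ℓ ^ 2 ≤ ((J:ℝ) - 1) * Bmax ℓ :=
                mul_le_mul_of_nonneg_left haux1 (by linarith)
              have haux3 : (0:ℝ) ≤ ((J:ℝ) - 1) * Bmax ℓ :=
                mul_nonneg (by linarith) h2
              linarith
        _ = ((2 * (J:ℝ) - 1) * Bmax ℓ) ^ (J - 1) := by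
            rw [Finset.prod_const, hcard]
    exact mul_le_mul_of_nonneg_left hprod hA0.le
  -- the induction
  set r : ℝ := Bmax ℓ' / Bbr with hr
  have hr0 : 0 ≤ r := div_nonneg (hmax0 ℓ') hBbrpos.le
  have main : ∀ n, Bmax (ℓ' + n) ≤ Bbr * r ^ ((J - 1) ^ n) := by
    intro n
    induction n with
    | zero =>
      simp only [Nat.add_zero, pow_zero, pow_one, hr]
      rw [mul_div_cancel₀ _ hBbrpos.ne']
    | succ n ih =>
      have hx0 : 0 ≤ Bbr * r ^ ((J - 1) ^ n) :=
        mul_nonneg hBbrpos.le (pow_nonneg hr0 _)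
      have hpt : ∀ t k, B (ℓ' + n + 1) t k ≤ Bbr * r ^ ((J - 1) ^ (n + 1)) := by
        intro t k
        refine (step (ℓ' + n) t k).trans ?_
        have hmono : ((2 * (J:ℝ) - 1) * Bmax (ℓ' + n)) ^ (J - 1) ≤
            ((2 * (J:ℝ) - 1) * (Bbr * r ^ ((J - 1) ^ n))) ^ (J - 1) := by
          refine pow_le_pow_left₀ (mul_nonneg hCpos.le (hmax0 _)) ?_ _
          exact mul_le_mul_of_nonneg_left ih hCpos.le
        have h2 : A * ((2 * (J:ℝ) - 1) * (Bbr * r ^ ((J - 1) ^ n))) ^ (J - 1) ≤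
            Bbr * r ^ ((J - 1) ^ (n + 1)) := by
          have e : A * ((2 * (J:ℝ) - 1) * (Bbr * r ^ ((J - 1) ^ n))) ^ (J - 1) =
              (A * (2 * (J:ℝ) - 1) ^ (J - 1) * Bbr ^ (J - 1)) *
                r ^ ((J - 1) ^ (n + 1)) := by
            rw [mul_pow, mul_pow, ← pow_mul, ← pow_succ]
            ring
          rw [e]
          exact mul_le_mul_of_nonneg_right key (pow_nonneg hr0 _)
        calc A * ((2 * (J:ℝ) - 1) * Bmax (ℓ' + n)) ^ (J - 1)
            ≤ A * ((2 * (J:ℝ) - 1) * (Bbr * r ^ ((J - 1) ^ n))) ^ (J - 1) :=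
              mul_le_mul_of_nonneg_left hmono hA0.le
          _ ≤ Bbr * r ^ ((J - 1) ^ (n + 1)) := h2
      have : Bmax (ℓ' + n + 1) ≤ Bbr * r ^ ((J - 1) ^ (n + 1)) := by
        rw [hBmax]
        exact ciSup_le fun t => ciSup_le fun k => hpt t k
      simpa [Nat.add_assoc] using this
  intro ℓ₀ hle t k
  refine ⟨hle_max ℓ₀ t k, ?_⟩
  have := main (ℓ₀ - ℓ')
  rwa [Nat.add_sub_cancel' hle] at this
end
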